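/- arXiv:1812.08186 — 5 statements merged into one kernel-verified Lean document; each statement's English description precedes it below -/
import Mathlib

section
/- The minimum Hamming weight of a nonzero codeword of the cycle code C_m equals m−1. -/
/-- The cycle code `C_m` on the complete graph `K_m`: edge-labelings `x` over `F_2`
(symmetric, zero on the diagonal) satisfying the triangle parity checks
`x i j + x j k + x i k = 0` for all `i < j < k`. -/
def cycleCode (m : ℕ) : Submodule (ZMod 2) (Fin m → Fin m → ZMod 2) where
  carrier := {x | (∀ i, x i i = 0) ∧ (∀ i j, x i j = x j i) ∧
    ∀ i j k : Fin m, i < j → j < k → x i j + x j k + x i k = 0}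
  zero_mem' := ⟨fun _ => rfl, fun _ _ => rfl, fun _ _ _ _ _ => by simp⟩
  add_mem' := by
    rintro a b ⟨ha1, ha2, ha3⟩ ⟨hb1, hb2, hb3⟩
    refine ⟨fun i => by simp [ha1 i, hb1 i], fun i j => by simp [ha2 i j, hb2 i j],
      fun i j k hij hjk => ?_⟩
    have h1 := ha3 i j k hij hjk
    have h2 := hb3 i j k hij hjk
    simp only [Pi.add_apply]
    linear_combination h1 + h2
  smul_mem' := by
    rintro c x ⟨h1, h2, h3⟩
    refine ⟨fun i => by simp [h1 i], fun i j => by simp [h2 i j],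
      fun i j k hij hjk => ?_⟩
    have h := h3 i j k hij hjk
    simp only [Pi.smul_apply, smul_eq_mul]
    linear_combination c * h

/-- The Hamming weight of an edge-labeling: the number of edges `{i,j}` (with `i < j`)
carrying the label `1`. -/
def edgeWeight {m : ℕ} (x : Fin m → Fin m → ZMod 2) : ℕ :=
  (Finset.univ.filter fun p : Fin m × Fin m => p.1 < p.2 ∧ x p.1 p.2 = 1).card


open Finset

lemma zmod2_cases (z : ZMod 2) : z = 0 ∨ z = 1 := by revert z; decide

lemma zmod2_add_eq_one (u v : ZMod 2) : u + v = 1 ↔ u ≠ v := by revert u v; decide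

lemma weight_cut {m : ℕ} (a : Fin m → ZMod 2) :
    edgeWeight (fun i j => a i + a j) =
      (univ.filter fun i => a i = 1).card * (univ.filter fun i => a i = 0).card := by
  classical
  rw [edgeWeight, ← card_product, ← filter_product]
  refine card_bij (fun p _ => if a p.1 = 1 then p else p.swap) ?_ ?_ ?_
  · intro p hp
    simp only [mem_filter, mem_univ, true_and] at hp ⊢
    obtain ⟨hlt, hne⟩ := hp
    rw [zmod2_add_eq_one] at hne
    rcases zmod2_cases (a p.1) with h1 | h1
    · rcases zmod2_cases (a p.2) with h2 | h2
      · exact absurd (h1.trans h2.symm) hne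
      · simp [h1, h2]
    · rcases zmod2_cases (a p.2) with h2 | h2
      · simp [h1, h2]
      · exact absurd (h1.trans h2.symm) hne
  · intro p hp q hq hpq
    simp only [mem_filter, mem_univ, true_and] at hp hq
    split_ifs at hpq with h1 h2 h2
    · exact hpq
    · -- p = q.swap
      have e1 : p.1 = q.2 := congrArg Prod.fst hpq
      have e2 : p.2 = q.1 := congrArg Prod.snd hpq
      have h1 := hp.1
      rw [e1, e2] at h1
      exact absurd (hq.1.trans h1) (lt_irrefl _)
    · have e1 : p.2 = q.1 := congrArg Prod.fst hpq
      have e2 : p.1 = q.2 := congrArg Prod.snd hpq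
      have h1 := hp.1
      rw [e1, e2] at h1
      exact absurd (h1.trans hq.1) (lt_irrefl _)
    · exact Prod.ext (congrArg Prod.snd hpq) (congrArg Prod.fst hpq)
  · rintro ⟨s, t⟩ hst
    simp only [mem_filter, mem_product, mem_univ, true_and] at hst
    obtain ⟨hs, ht⟩ := hst
    have hne : s ≠ t := fun h => by rw [h, ht] at hs; exact one_ne_zero hs.symm
    rcases lt_or_gt_of_ne hne with h | h
    · refine ⟨(s, t), ?_, ?_⟩
      · simp [mem_filter, h, zmod2_add_eq_one, hs, ht]
      · simp [hs]
    · refine ⟨(t, s), ?_, ?_⟩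
      · simp [mem_filter, h, zmod2_add_eq_one, hs, ht]
      · simp [ht, hs]

lemma nat_ineq (k j : ℕ) (hk : 1 ≤ k) (hj : 1 ≤ j) : k + j - 1 ≤ k * j := by
  obtain ⟨k', rfl⟩ := Nat.exists_eq_add_of_le hk
  obtain ⟨j', rfl⟩ := Nat.exists_eq_add_of_le hj
  have h : 1 + k' + (1 + j') - 1 = 1 + k' + j' := by omega
  rw [h]
  nlinarith

lemma zmod2_tri (u v w : ZMod 2) (h : u + v + w = 0) : v = u + w := by
  revert u v w; decide

lemma zmod2_add_self (z : ZMod 2) : z + z = 0 := by revert z; decide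

theorem main_thm (m : ℕ) (hm : 3 ≤ m) :
    IsLeast {w | ∃ x ∈ cycleCode m, x ≠ 0 ∧ edgeWeight x = w} (m - 1) := by
  classical
  have hm0 : 0 < m := by omega
  constructor
  · -- m - 1 is achieved
    set i0 : Fin m := ⟨0, hm0⟩ with hi0
    set a : Fin m → ZMod 2 := fun i => if i = i0 then 1 else 0 with ha
    refine ⟨fun i j => a i + a j, ⟨fun i => zmod2_add_self _, fun i j => add_comm _ _,
      fun i j k _ _ =>
        (show ∀ u v w : ZMod 2, (u + v) + (v + w) + (u + w) = 0 by decide) _ _ _⟩,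
      ?_, ?_⟩
    · intro h0
      set i1 : Fin m := ⟨1, by omega⟩ with hi1
      have hne : i1 ≠ i0 := by simp [hi1, hi0, Fin.ext_iff]
      have := congrFun (congrFun h0 i0) i1
      simp [ha, hne] at this
    · rw [weight_cut]
      have h1 : (Finset.univ.filter fun i => a i = 1) = {i0} := by
        ext i; by_cases h : i = i0 <;> simp [ha, h]
      have h2 : (Finset.univ.filter fun i => a i = 0) = Finset.univ.erase i0 := by
        ext i; by_cases h : i = i0 <;> simp [ha, h]
      rw [h1, h2, Finset.card_singleton, one_mul,
        Finset.card_erase_of_mem (Finset.mem_univ _), Finset.card_univ, Fintype.card_fin]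
  · -- lower bound
    rintro w ⟨x, ⟨hdiag, hsym, htri⟩, hx0, rfl⟩
    set i0 : Fin m := ⟨0, hm0⟩ with hi0
    set a : Fin m → ZMod 2 := x i0 with ha
    have main : ∀ i j : Fin m, i < j → x i j = a i + a j := by
      intro i j hij
      have h0i : i0 ≤ i := by simp [hi0, Fin.le_def]
      rcases h0i.lt_or_eq with h | h
      · exact zmod2_tri _ _ _ (htri i0 i j h hij)
      · rw [← h, ha]
        show x i0 j = x i0 i0 + x i0 j
        rw [hdiag, zero_add]
    have key : ∀ i j, x i j = a i + a j := by
      intro i j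
      rcases lt_trichotomy i j with h | h | h
      · exact main i j h
      · subst h; rw [hdiag]; exact (zmod2_add_self _).symm
      · rw [hsym i j, main j i h, add_comm]
    have hxeq : x = fun i j => a i + a j := by funext i j; exact key i j
    rw [hxeq, weight_cut a]
    set k := (Finset.univ.filter fun i => a i = 1).card with hk
    set l := (Finset.univ.filter fun i => a i = 0).card with hl
    have hk1 : 1 ≤ k := by
      obtain ⟨i, hi⟩ := Function.ne_iff.mp hx0
      obtain ⟨j, hj⟩ := Function.ne_iff.mp hi
      have hne : x i j ≠ 0 := hj
      rw [key i j] at hne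
      rcases zmod2_cases (a i) with h | h
      · rcases zmod2_cases (a j) with h' | h'
        · exact absurd (by rw [h, h']; decide) hne
        · refine Finset.card_pos.mpr ⟨j, ?_⟩
          simp [h']
      · refine Finset.card_pos.mpr ⟨i, ?_⟩
        simp [h]
    have hl1 : 1 ≤ l := by
      refine Finset.card_pos.mpr ⟨i0, ?_⟩
      simp [ha, hdiag i0]
    have hsum : k + l = m := by
      have heq : (Finset.univ.filter fun i => a i = 0) =
          (Finset.univ.filter fun i => ¬ (a i = 1)) := by
        ext i
        rcases zmod2_cases (a i) with h | h <;> simp [h]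
      rw [hk, hl, heq, Finset.card_filter_add_card_filter_not, Finset.card_univ,
        Fintype.card_fin]
    calc m - 1 = k + l - 1 := by rw [hsum]
      _ ≤ k * l := nat_ineq k l hk1 hl1

/-- The minimum Hamming weight of a nonzero codeword of the cycle code `C_m`
equals `m - 1`. -/
theorem cycleCode_minWeight (m : ℕ) (hm : 3 ≤ m) :
    IsLeast {w | ∃ x ∈ cycleCode m, x ≠ 0 ∧ edgeWeight x = w} (m - 1) := main_thm m hm
end

section
/- The F_2-solution space of the Y-code of the standard j×j surface code (the set of Y-error configurations with trivial syndrome) has dimension exactly j, and every codeword is uniquely determined by its restriction to the top row of horizontal edges. -/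
/-- Edges (physical qubits) of the standard `j×k` surface code: `j·k` horizontal edges
(indexed by row and column) and `(j-1)·(k-1)` vertical edges. -/
abbrev SurfEdge (j k : ℕ) := (Fin j × Fin k) ⊕ (Fin (j - 1) × Fin (k - 1))

/-- Vertices (`X`-type stabilizer generators) of the standard `j×k` surface code. -/
abbrev SurfVertex (j k : ℕ) := Fin j × Fin (k - 1)

/-- Plaquettes (`Z`-type stabilizer generators) of the standard `j×k` surface code. -/
abbrev SurfPlaq (j k : ℕ) := Fin (j - 1) × Fin k

/-- Indicator (over `F₂`) of the incidence of an edge with the vertex `v`: the support of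
the vertex stabilizer `A_v = ∏_{e ∈ v} X_e`. -/
def vInd {j k : ℕ} (v : SurfVertex j k) (e : SurfEdge j k) : ZMod 2 :=
  match e with
  | .inl (r, c) => if r = v.1 ∧ (c.1 = v.2.1 ∨ c.1 = v.2.1 + 1) then 1 else 0
  | .inr (s, c) => if c = v.2 ∧ (s.1 + 1 = v.1.1 ∨ s.1 = v.1.1) then 1 else 0

/-- Indicator (over `F₂`) of the incidence of an edge with the plaquette `p`: the support
of the plaquette stabilizer `B_p = ∏_{e ∈ p} Z_e`. -/
def pInd {j k : ℕ} (p : SurfPlaq j k) (e : SurfEdge j k) : ZMod 2 :=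
  match e with
  | .inl (r, c) => if c = p.2 ∧ (r.1 = p.1.1 ∨ r.1 = p.1.1 + 1) then 1 else 0
  | .inr (s, c) => if s = p.1 ∧ (c.1 + 1 = p.2.1 ∨ c.1 = p.2.1) then 1 else 0

/-- The syndrome of the `Y`-configuration `y` at vertex `v`: `A_v(y) = ∑_{e ∈ v} y_e`. -/
def Asum {j k : ℕ} (v : SurfVertex j k) (y : SurfEdge j k → ZMod 2) : ZMod 2 :=
  ∑ e, vInd v e * y e

/-- The syndrome of the `Y`-configuration `y` at plaquette `p`: `B_p(y) = ∑_{e ∈ p} y_e`. -/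
def Bsum {j k : ℕ} (p : SurfPlaq j k) (y : SurfEdge j k → ZMod 2) : ZMod 2 :=
  ∑ e, pInd p e * y e

/-- The `Y`-code of the standard `j×k` surface code: the `F₂`-space of `Y`-error
configurations with trivial syndrome, i.e. `A_v(y) = 0` for all vertices and
`B_p(y) = 0` for all plaquettes. -/
def Ycode (j k : ℕ) : Submodule (ZMod 2) (SurfEdge j k → ZMod 2) where
  carrier := {y | (∀ v, Asum v y = 0) ∧ ∀ p, Bsum p y = 0}
  zero_mem' := ⟨fun v => by simp [Asum], fun p => by simp [Bsum]⟩
  add_mem' := by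
    rintro a b ⟨ha1, ha2⟩ ⟨hb1, hb2⟩
    constructor
    · intro v
      simp only [Asum, Pi.add_apply, mul_add, Finset.sum_add_distrib] at *
      rw [ha1 v, hb1 v, add_zero]
    · intro p
      simp only [Bsum, Pi.add_apply, mul_add, Finset.sum_add_distrib] at *
      rw [ha2 p, hb2 p, add_zero]
  smul_mem' := by
    rintro c y ⟨h1, h2⟩
    constructor
    · intro v
      simp only [Asum, Pi.smul_apply, smul_eq_mul, mul_left_comm, ← Finset.mul_sum] at *
      rw [h1 v, mul_zero]
    · intro p
      simp only [Bsum, Pi.smul_apply, smul_eq_mul, mul_left_comm, ← Finset.mul_sum] at *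
      rw [h2 p, mul_zero]

/-- `Y`-configurations corresponding to `Y`-type stabilizers: those that are
simultaneously a sum of vertex-stabilizer supports and a sum of plaquette-stabilizer
supports. -/
def Ystab (j k : ℕ) : Submodule (ZMod 2) (SurfEdge j k → ZMod 2) :=
  Submodule.span (ZMod 2) (Set.range (vInd (j := j) (k := k))) ⊓
    Submodule.span (ZMod 2) (Set.range (pInd (j := j) (k := k)))

/-- The weight of a configuration: the number of qubits on which it is nonzero. -/
def swt {j k : ℕ} (y : SurfEdge j k → ZMod 2) : ℕ :=
  (Finset.univ.filter fun e => y e = 1).card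

namespace SqY
open Finset

lemma two_eq_zero : (2 : ZMod 2) = 0 := rfl

lemma sum_ite_fin {n : ℕ} (t : ℕ) (f : Fin n → ZMod 2) :
    (∑ s : Fin n, if s.1 = t then f s else 0) =
      (if h : t < n then f ⟨t, h⟩ else 0) := by
  split_ifs with h
  · rw [show (fun s : Fin n => if s.1 = t then f s else 0)
        = fun s : Fin n => if s = ⟨t, h⟩ then f s else 0 from ?_]
    · rw [Finset.sum_ite_eq' Finset.univ]
      simp
    · funext s
      congr 1
      simp [Fin.ext_iff]
  · rw [Finset.sum_eq_zero]
    intro s _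
    rw [if_neg]
    have := s.2
    omega

/-- partial sums of `a` -/
def S {j : ℕ} (a : Fin j → ZMod 2) (m : ℕ) : ZMod 2 :=
  ∑ c ∈ Finset.univ.filter (fun c : Fin j => c.1 < m), a c

/-- fold `x` into `[0,j]` using period `2j` and symmetry about `0`. -/
def fold (j : ℕ) (x : ℤ) : ℕ := min (x % (2*j)).toNat (2*j - (x % (2*j)).toNat)

/-- The symmetric, `2j`-periodic extension of the partial sums of `a`. -/
def Fa {j : ℕ} (a : Fin j → ZMod 2) (x : ℤ) : ZMod 2 := S a (fold j x)

lemma fold_period {j : ℕ} (x : ℤ) : fold j (x + 2*j) = fold j x := by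
  unfold fold
  have h : x + 2*(j:ℤ) = x + (2*(j:ℤ))*1 := by ring
  rw [h, Int.add_mul_emod_self_left]

lemma fold_neg {j : ℕ} (hj : 1 ≤ j) (x : ℤ) : fold j (-x) = fold j x := by
  have hj' : (0:ℤ) < 2*j := by omega
  have h0 : 0 ≤ x % (2*(j:ℤ)) := Int.emod_nonneg x (by omega)
  have h1 : x % (2*(j:ℤ)) < 2*j := Int.emod_lt_of_pos x hj'
  have key : (-x) % (2*(j:ℤ)) = (2*(j:ℤ) - x % (2*j)) % (2*j) := by
    rw [Int.neg_emod_eq_sub_emod, Int.sub_emod, Int.sub_emod (2*(j:ℤ)) (x % (2*(j:ℤ))),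
      Int.emod_emod_of_dvd _ dvd_rfl]
  by_cases hr : x % (2*(j:ℤ)) = 0
  · unfold fold
    rw [key, hr]
    simp
  · have key2 : (-x) % (2*(j:ℤ)) = 2*(j:ℤ) - x % (2*j) := by
      rw [key]
      exact Int.emod_eq_of_lt (by omega) (by omega)
    unfold fold
    rw [key2]
    simp only [Nat.min_def]
    split_ifs <;> omega

lemma fold_natCast {j : ℕ} (hj : 1 ≤ j) (c : ℕ) (hc : c ≤ j) : fold j (c : ℤ) = c := by
  unfold fold
  rw [Int.emod_eq_of_lt (by omega) (by omega)]
  simp only [Nat.min_def]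
  split_ifs <;> omega

lemma Fa_period {j : ℕ} (a : Fin j → ZMod 2) (x : ℤ) : Fa a (x + 2*j) = Fa a x := by
  unfold Fa; rw [fold_period]

lemma Fa_neg {j : ℕ} (hj : 1 ≤ j) (a : Fin j → ZMod 2) (x : ℤ) : Fa a (-x) = Fa a x := by
  unfold Fa; rw [fold_neg hj]

lemma S_succ {j : ℕ} (a : Fin j → ZMod 2) (c : Fin j) :
    S a (c.1 + 1) = S a c.1 + a c := by
  unfold S
  have h : Finset.univ.filter (fun x : Fin j => x.1 < c.1 + 1)
      = insert c (Finset.univ.filter (fun x : Fin j => x.1 < c.1)) := by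
    ext x
    simp [Fin.ext_iff]
    omega
  rw [h, Finset.sum_insert (by simp)]
  ring

lemma Fa_step {j : ℕ} (hj : 1 ≤ j) (a : Fin j → ZMod 2) (c : Fin j) :
    Fa a (c.1 : ℤ) + Fa a ((c.1 : ℤ) + 1) = a c := by
  unfold Fa
  have h1 : ((c.1 : ℤ) + 1) = ((c.1 + 1 : ℕ) : ℤ) := by push_cast; ring
  rw [h1, fold_natCast hj c.1 (by omega), fold_natCast hj (c.1+1) (by omega), S_succ]
  have h2 : ∀ x y : ZMod 2, x + (x + y) = y := by decide
  exact h2 _ _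

end SqY
namespace SqY
open Finset

lemma ite_or_exclusive (A B : Prop) [Decidable A] [Decidable B] (h : ¬(A ∧ B)) (x : ZMod 2) :
    (if A ∨ B then x else 0) = (if A then x else 0) + (if B then x else 0) := by
  by_cases hA : A <;> by_cases hB : B <;> simp [hA, hB] <;> tauto

lemma sum_ite_or_fin {n : ℕ} (t u : ℕ) (htu : t ≠ u) (f : Fin n → ZMod 2) :
    (∑ s : Fin n, if s.1 = t ∨ s.1 = u then f s else 0)
      = (if h : t < n then f ⟨t, h⟩ else 0) + (if h : u < n then f ⟨u, h⟩ else 0) := by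
  rw [Finset.sum_congr rfl (fun s _ => ite_or_exclusive _ _ (by omega) _),
    Finset.sum_add_distrib, sum_ite_fin, sum_ite_fin]

lemma sum_pair_fst {n m : ℕ} (r0 : Fin n) (Q : Fin m → Prop) [DecidablePred Q]
    (f : Fin n × Fin m → ZMod 2) :
    (∑ q : Fin n × Fin m, if q.1 = r0 ∧ Q q.2 then f q else 0)
      = ∑ c : Fin m, if Q c then f (r0, c) else 0 := by
  have h : ∀ r : Fin n, (∑ c, if r = r0 ∧ Q c then f (r, c) else 0)
      = if r = r0 then (∑ c, if Q c then f (r, c) else 0) else 0 := by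
    intro r; by_cases h : r = r0 <;> simp [h]
  rw [Fintype.sum_prod_type, Finset.sum_congr rfl fun r _ => h r,
    Finset.sum_ite_eq' Finset.univ]
  simp

lemma sum_pair_snd {n m : ℕ} (c0 : Fin m) (P : Fin n → Prop) [DecidablePred P]
    (f : Fin n × Fin m → ZMod 2) :
    (∑ q : Fin n × Fin m, if P q.1 ∧ q.2 = c0 then f q else 0)
      = ∑ s : Fin n, if P s then f (s, c0) else 0 := by
  have h : ∀ s : Fin n, (∑ c, if P s ∧ c = c0 then f (s, c) else 0)
      = if P s then f (s, c0) else 0 := by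
    intro s
    by_cases h : P s
    · simp only [h, true_and]
      rw [Finset.sum_ite_eq' Finset.univ]
      simp
    · simp [h]
  rw [Fintype.sum_prod_type, Finset.sum_congr rfl fun s _ => h s]

/-- `y` on horizontal edges, extended by zero to all of `ℤ × ℤ`. -/
def Eh {j : ℕ} (y : SurfEdge j j → ZMod 2) (r c : ℤ) : ZMod 2 :=
  if h : 0 ≤ r ∧ r < j ∧ 0 ≤ c ∧ c < j then
    y (.inl (⟨r.toNat, by omega⟩, ⟨c.toNat, by omega⟩)) else 0

/-- `y` on vertical edges, extended by zero to all of `ℤ × ℤ`. -/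
def Ev {j : ℕ} (y : SurfEdge j j → ZMod 2) (s c : ℤ) : ZMod 2 :=
  if h : 0 ≤ s ∧ s < (j:ℤ) - 1 ∧ 0 ≤ c ∧ c < (j:ℤ) - 1 then
    y (.inr (⟨s.toNat, by omega⟩, ⟨c.toNat, by omega⟩)) else 0

lemma Eh_natCast {j : ℕ} (y : SurfEdge j j → ZMod 2) (r c : ℕ) :
    Eh y (r : ℤ) (c : ℤ) = if h : r < j ∧ c < j then y (.inl (⟨r, h.1⟩, ⟨c, h.2⟩)) else 0 := by
  unfold Eh
  by_cases h : r < j ∧ c < j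
  · rw [dif_pos (by omega), dif_pos h]
    congr 1 <;> simp [Fin.ext_iff]
  · rw [dif_neg (by omega), dif_neg h]

lemma Ev_natCast {j : ℕ} (y : SurfEdge j j → ZMod 2) (s c : ℕ) :
    Ev y (s : ℤ) (c : ℤ) = if h : s < j - 1 ∧ c < j - 1 then y (.inr (⟨s, h.1⟩, ⟨c, h.2⟩)) else 0 := by
  unfold Ev
  by_cases h : s < j - 1 ∧ c < j - 1
  · rw [dif_pos (by omega), dif_pos h]
    congr 1 <;> simp [Fin.ext_iff]
  · rw [dif_neg (by omega), dif_neg h]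

lemma Ev_neg_one {j : ℕ} (y : SurfEdge j j → ZMod 2) (c : ℤ) : Ev y (-1) c = 0 :=
  dif_neg (by omega)

end SqY
namespace SqY
open Finset

lemma Asum_ext {j : ℕ} (y : SurfEdge j j → ZMod 2) (v : SurfVertex j j) :
    Asum v y = Eh y v.1.1 v.2.1 + Eh y v.1.1 ((v.2.1 : ℤ) + 1)
      + Ev y ((v.1.1 : ℤ) - 1) v.2.1 + Ev y v.1.1 v.2.1 := by
  obtain ⟨vr, vm⟩ := v
  have hm := vm.2
  have hr := vr.2
  have hj2 : 2 ≤ j := by omega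
  unfold Asum
  rw [Fintype.sum_sum_type]
  have e1 : ∀ p : Fin j × Fin j, vInd (vr, vm) (.inl p) * y (.inl p)
      = if p.1 = vr ∧ (p.2.1 = vm.1 ∨ p.2.1 = vm.1 + 1) then y (.inl p) else 0 := by
    rintro ⟨r, c⟩
    show (if r = vr ∧ (c.1 = vm.1 ∨ c.1 = vm.1 + 1) then (1 : ZMod 2) else 0) * _ = _
    split_ifs <;> simp
  have e2 : ∀ q : Fin (j-1) × Fin (j-1), vInd (vr, vm) (.inr q) * y (.inr q)
      = if (q.1.1 + 1 = vr.1 ∨ q.1.1 = vr.1) ∧ q.2 = vm then y (.inr q) else 0 := by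
    rintro ⟨s, c⟩
    show (if c = vm ∧ (s.1 + 1 = vr.1 ∨ s.1 = vr.1) then (1 : ZMod 2) else 0) * _ = _
    split_ifs <;> simp <;> tauto
  have hp1 := sum_pair_fst (m := j) vr (fun c => c.1 = vm.1 ∨ c.1 = vm.1 + 1)
    (fun p => y (.inl p))
  have hp2 := sum_pair_snd (n := j - 1) vm (fun s => s.1 + 1 = vr.1 ∨ s.1 = vr.1)
    (fun q => y (.inr q))
  have hor : (∑ s : Fin (j-1), if s.1 + 1 = vr.1 ∨ s.1 = vr.1 then y (.inr (s, vm)) else 0)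
      = (∑ s : Fin (j-1), if s.1 + 1 = vr.1 then y (.inr (s, vm)) else 0)
        + ∑ s : Fin (j-1), if s.1 = vr.1 then y (.inr (s, vm)) else 0 := by
    rw [Finset.sum_congr rfl (fun s _ => ite_or_exclusive _ _ (by omega) _),
      Finset.sum_add_distrib]
  rw [Finset.sum_congr rfl fun p _ => e1 p, Finset.sum_congr rfl fun q _ => e2 q,
    hp1, hp2, hor, sum_ite_or_fin _ _ (by omega : vm.1 ≠ vm.1 + 1), sum_ite_fin vr.1]
  have hEh1 : Eh y (vr.1 : ℤ) (vm.1 : ℤ) = y (.inl (vr, ⟨vm.1, by omega⟩)) := by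
    rw [Eh_natCast, dif_pos ⟨by omega, by omega⟩]
  have hEh2 : Eh y (vr.1 : ℤ) ((vm.1 : ℤ) + 1) = y (.inl (vr, ⟨vm.1 + 1, by omega⟩)) := by
    have h := Eh_natCast y vr.1 (vm.1 + 1)
    rw [dif_pos ⟨by omega, by omega⟩] at h
    push_cast at h
    exact h
  have hEv2 : Ev y (vr.1 : ℤ) (vm.1 : ℤ)
      = if h : vr.1 < j - 1 then y (.inr (⟨vr.1, h⟩, vm)) else 0 := by
    rw [Ev_natCast]
    split_ifs <;> first | rfl | omega
  rw [hEh1, hEh2, hEv2]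
  -- remaining: the `s.1 + 1 = vr.1` sum equals `Ev y (vr.1 - 1) vm.1`
  rcases Nat.eq_zero_or_pos vr.1 with h0 | h1
  · have : (∑ s : Fin (j-1), if s.1 + 1 = vr.1 then y (.inr (s, vm)) else 0) = 0 := by
      apply Finset.sum_eq_zero
      intro s _
      rw [if_neg (by omega)]
    rw [this, show ((vr.1 : ℤ) - 1) = -1 by omega, Ev_neg_one]
    rw [dif_pos (by omega), dif_pos (by omega)]
    simp [Fin.eta]
  · have hcong : (∑ s : Fin (j-1), if s.1 + 1 = vr.1 then y (.inr (s, vm)) else 0)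
        = ∑ s : Fin (j-1), if s.1 = vr.1 - 1 then y (.inr (s, vm)) else 0 := by
      refine Finset.sum_congr rfl fun s _ => ?_
      congr 1
      simp only [eq_iff_iff]
      omega
    rw [hcong, sum_ite_fin, dif_pos (by omega : vr.1 - 1 < j - 1)]
    have hEv1 : Ev y ((vr.1 : ℤ) - 1) (vm.1 : ℤ) = y (.inr (⟨vr.1 - 1, by omega⟩, vm)) := by
      rw [show ((vr.1 : ℤ) - 1) = ((vr.1 - 1 : ℕ) : ℤ) by omega, Ev_natCast,
        dif_pos ⟨by omega, by omega⟩]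
    rw [hEv1, dif_pos (by omega), dif_pos (by omega)]
    rw [← add_assoc]

end SqY
namespace SqY
open Finset

lemma Bsum_ext {j : ℕ} (y : SurfEdge j j → ZMod 2) (p : SurfPlaq j j) :
    Bsum p y = Eh y p.1.1 p.2.1 + Eh y ((p.1.1 : ℤ) + 1) p.2.1
      + Ev y p.1.1 ((p.2.1 : ℤ) - 1) + Ev y p.1.1 p.2.1 := by
  obtain ⟨ps, pc⟩ := p
  have hs := ps.2
  have hc := pc.2
  have hj2 : 2 ≤ j := by omega
  unfold Bsum
  rw [Fintype.sum_sum_type]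
  have e1 : ∀ q : Fin j × Fin j, pInd (ps, pc) (.inl q) * y (.inl q)
      = if (q.1.1 = ps.1 ∨ q.1.1 = ps.1 + 1) ∧ q.2 = pc then y (.inl q) else 0 := by
    rintro ⟨r, c⟩
    show (if c = pc ∧ (r.1 = ps.1 ∨ r.1 = ps.1 + 1) then (1 : ZMod 2) else 0) * _ = _
    split_ifs <;> simp <;> tauto
  have e2 : ∀ q : Fin (j-1) × Fin (j-1), pInd (ps, pc) (.inr q) * y (.inr q)
      = if q.1 = ps ∧ (q.2.1 + 1 = pc.1 ∨ q.2.1 = pc.1) then y (.inr q) else 0 := by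
    rintro ⟨s, c⟩
    show (if s = ps ∧ (c.1 + 1 = pc.1 ∨ c.1 = pc.1) then (1 : ZMod 2) else 0) * _ = _
    split_ifs <;> simp <;> tauto
  have hp1 := sum_pair_snd (n := j) pc (fun r => r.1 = ps.1 ∨ r.1 = ps.1 + 1)
    (fun q => y (.inl q))
  have hp2 := sum_pair_fst (m := j - 1) ps (fun c => c.1 + 1 = pc.1 ∨ c.1 = pc.1)
    (fun q => y (.inr q))
  have hor : (∑ c : Fin (j-1), if c.1 + 1 = pc.1 ∨ c.1 = pc.1 then y (.inr (ps, c)) else 0)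
      = (∑ c : Fin (j-1), if c.1 + 1 = pc.1 then y (.inr (ps, c)) else 0)
        + ∑ c : Fin (j-1), if c.1 = pc.1 then y (.inr (ps, c)) else 0 := by
    rw [Finset.sum_congr rfl (fun c _ => ite_or_exclusive _ _ (by omega) _),
      Finset.sum_add_distrib]
  rw [Finset.sum_congr rfl fun q _ => e1 q, Finset.sum_congr rfl fun q _ => e2 q,
    hp1, hp2, hor, sum_ite_or_fin _ _ (by omega : ps.1 ≠ ps.1 + 1), sum_ite_fin pc.1]
  have hEh1 : Eh y (ps.1 : ℤ) (pc.1 : ℤ) = y (.inl (⟨ps.1, by omega⟩, pc)) := by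
    rw [Eh_natCast, dif_pos ⟨by omega, by omega⟩]
  have hEh2 : Eh y ((ps.1 : ℤ) + 1) (pc.1 : ℤ) = y (.inl (⟨ps.1 + 1, by omega⟩, pc)) := by
    have h := Eh_natCast y (ps.1 + 1) pc.1
    rw [dif_pos ⟨by omega, by omega⟩] at h
    push_cast at h
    exact h
  have hEv2 : Ev y (ps.1 : ℤ) (pc.1 : ℤ)
      = if h : pc.1 < j - 1 then y (.inr (ps, ⟨pc.1, h⟩)) else 0 := by
    rw [Ev_natCast]
    split_ifs <;> first | rfl | omega
  rw [hEh1, hEh2, hEv2]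
  rcases Nat.eq_zero_or_pos pc.1 with h0 | h1
  · have hz : (∑ c : Fin (j-1), if c.1 + 1 = pc.1 then y (.inr (ps, c)) else 0) = 0 := by
      apply Finset.sum_eq_zero
      intro c _
      rw [if_neg (by omega)]
    rw [hz, show ((pc.1 : ℤ) - 1) = -1 by omega]
    rw [show Ev y (ps.1 : ℤ) (-1) = 0 from dif_neg (by omega)]
    rw [dif_pos (by omega), dif_pos (by omega)]
    simp [Fin.eta]
  · have hcong : (∑ c : Fin (j-1), if c.1 + 1 = pc.1 then y (.inr (ps, c)) else 0)
        = ∑ c : Fin (j-1), if c.1 = pc.1 - 1 then y (.inr (ps, c)) else 0 := by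
      refine Finset.sum_congr rfl fun c _ => ?_
      congr 1
      simp only [eq_iff_iff]
      omega
    rw [hcong, sum_ite_fin, dif_pos (by omega : pc.1 - 1 < j - 1)]
    have hEv1 : Ev y (ps.1 : ℤ) ((pc.1 : ℤ) - 1) = y (.inr (ps, ⟨pc.1 - 1, by omega⟩)) := by
      rw [show ((pc.1 : ℤ) - 1) = ((pc.1 - 1 : ℕ) : ℤ) by omega, Ev_natCast,
        dif_pos ⟨by omega, by omega⟩]
    rw [hEv1, dif_pos (by omega), dif_pos (by omega)]
    rw [← add_assoc]

end SqY
namespace SqY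
open Finset

/-- The codeword determined by the symmetric data `a` on the top row. -/
def yconf {j : ℕ} (a : Fin j → ZMod 2) : SurfEdge j j → ZMod 2
  | .inl (r, c) => Fa a ((c.1 : ℤ) - r.1) + Fa a ((c.1 : ℤ) + r.1 + 1)
  | .inr (s, c) => Fa a ((c.1 : ℤ) - s.1) + Fa a ((c.1 : ℤ) + s.1 + 2)

lemma Eh_yconf {j : ℕ} (a : Fin j → ZMod 2) (r c : ℤ)
    (h : 0 ≤ r ∧ r < j ∧ 0 ≤ c ∧ c < j) :
    Eh (yconf a) r c = Fa a (c - r) + Fa a (c + r + 1) := by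
  unfold Eh
  rw [dif_pos h]
  show Fa a ((c.toNat : ℤ) - r.toNat) + Fa a ((c.toNat : ℤ) + r.toNat + 1) = _
  rw [Int.toNat_of_nonneg h.1, Int.toNat_of_nonneg h.2.2.1]

lemma Ev_yconf {j : ℕ} (a : Fin j → ZMod 2) (s c : ℤ)
    (h : 0 ≤ s ∧ s < (j:ℤ) - 1 ∧ 0 ≤ c ∧ c < (j:ℤ) - 1) :
    Ev (yconf a) s c = Fa a (c - s) + Fa a (c + s + 2) := by
  unfold Ev
  rw [dif_pos h]
  show Fa a ((c.toNat : ℤ) - s.toNat) + Fa a ((c.toNat : ℤ) + s.toNat + 2) = _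
  rw [Int.toNat_of_nonneg h.1, Int.toNat_of_nonneg h.2.2.1]

lemma yconf_mem {j : ℕ} (hj : 1 ≤ j) (a : Fin j → ZMod 2) : yconf a ∈ Ycode j j := by
  constructor
  · intro v
    obtain ⟨vr, vm⟩ := v
    have hm := vm.2
    have hr := vr.2
    have hj2 : 2 ≤ j := by omega
    rw [Asum_ext]
    dsimp only
    rw [Eh_yconf a _ _ ⟨by omega, by omega, by omega, by omega⟩,
      Eh_yconf a _ _ ⟨by omega, by omega, by omega, by omega⟩]
    by_cases hr0 : vr.1 = 0
    · rw [show ((vr.1 : ℤ) - 1) = -1 by omega,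
        show Ev (yconf a) (-1) (vm.1 : ℤ) = 0 from dif_neg (by omega),
        Ev_yconf a _ _ ⟨by omega, by omega, by omega, by omega⟩,
        show (vr.1 : ℤ) = 0 by omega]
      ring_nf
      simp [two_eq_zero]
    · by_cases hrt : vr.1 = j - 1
      · rw [show Ev (yconf a) (vr.1 : ℤ) (vm.1 : ℤ) = 0 from dif_neg (by omega),
          Ev_yconf a _ _ ⟨by omega, by omega, by omega, by omega⟩,
          show ((vm.1:ℤ) + 1 + (vr.1:ℤ) + 1) = ((vm.1:ℤ) - vr.1) + 2*(j:ℤ) by omega,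
          Fa_period]
        ring_nf
        simp [two_eq_zero]
      · rw [Ev_yconf a _ _ ⟨by omega, by omega, by omega, by omega⟩,
          Ev_yconf a _ _ ⟨by omega, by omega, by omega, by omega⟩]
        ring_nf
        simp [two_eq_zero]
  · intro p
    obtain ⟨ps, pc⟩ := p
    have hs := ps.2
    have hc := pc.2
    have hj2 : 2 ≤ j := by omega
    rw [Bsum_ext]
    dsimp only
    rw [Eh_yconf a _ _ ⟨by omega, by omega, by omega, by omega⟩,
      Eh_yconf a _ _ ⟨by omega, by omega, by omega, by omega⟩]
    by_cases hc0 : pc.1 = 0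
    · rw [show ((pc.1 : ℤ) - 1) = -1 by omega,
        show Ev (yconf a) (ps.1 : ℤ) (-1) = 0 from dif_neg (by omega),
        Ev_yconf a _ _ ⟨by omega, by omega, by omega, by omega⟩,
        show ((pc.1:ℤ) - ((ps.1:ℤ) + 1)) = -((pc.1:ℤ) + ps.1 + 1) by omega,
        Fa_neg hj]
      ring_nf
      simp [two_eq_zero]
    · by_cases hct : pc.1 = j - 1
      · rw [show Ev (yconf a) (ps.1 : ℤ) (pc.1 : ℤ) = 0 from dif_neg (by omega),
          Ev_yconf a _ _ ⟨by omega, by omega, by omega, by omega⟩,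
          show ((pc.1:ℤ) + ((ps.1:ℤ) + 1) + 1) = -((pc.1:ℤ) - ps.1) + 2*(j:ℤ) by omega,
          Fa_period, Fa_neg hj]
        ring_nf
        simp [two_eq_zero]
      · rw [Ev_yconf a _ _ ⟨by omega, by omega, by omega, by omega⟩,
          Ev_yconf a _ _ ⟨by omega, by omega, by omega, by omega⟩]
        ring_nf
        simp [two_eq_zero]

lemma yconf_top {j : ℕ} (hj : 1 ≤ j) (a : Fin j → ZMod 2) (c : Fin j) (hz : 0 < j) :
    yconf a (.inl (⟨0, hz⟩, c)) = a c := by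
  show Fa a ((c.1 : ℤ) - ((0:ℕ) : ℤ)) + Fa a ((c.1 : ℤ) + ((0:ℕ) : ℤ) + 1) = a c
  rw [show ((c.1 : ℤ) - ((0:ℕ) : ℤ)) = (c.1 : ℤ) by omega,
    show ((c.1 : ℤ) + ((0:ℕ) : ℤ) + 1) = (c.1 : ℤ) + 1 by omega]
  exact Fa_step hj a c

end SqY
namespace SqY
open Finset

lemma eq_zero_of_top_zero {j : ℕ} (hj : 1 ≤ j) (y : SurfEdge j j → ZMod 2)
    (hy : y ∈ Ycode j j) (h0 : ∀ c : Fin j, y (.inl (⟨0, Nat.lt_of_lt_of_le Nat.zero_lt_one hj⟩, c)) = 0) :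
    y = 0 := by
  obtain ⟨hA, hB⟩ := hy
  have main : ∀ r : ℕ, (∀ c : ℤ, Eh y (r:ℤ) c = 0) ∧ (∀ c : ℤ, Ev y (r:ℤ) c = 0) := by
    intro r
    induction r using Nat.strong_induction_on with
    | _ r IH =>
    have hH : ∀ c : ℤ, Eh y (r:ℤ) c = 0 := by
      intro c
      by_cases hin : 0 ≤ c ∧ c < (j:ℤ) ∧ r < j
      case neg => exact dif_neg (by omega)
      case pos =>
        rcases Nat.eq_zero_or_pos r with h0r | h1r
        · subst h0r
          unfold Eh
          rw [dif_pos (by omega)]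
          exact h0 ⟨c.toNat, by omega⟩
        · have hp := hB (⟨r - 1, by omega⟩, ⟨c.toNat, by omega⟩)
          rw [Bsum_ext] at hp
          dsimp only at hp
          rw [(IH (r-1) (by omega)).1 _, (IH (r-1) (by omega)).2 _,
            (IH (r-1) (by omega)).2 _,
            show (((r-1 : ℕ):ℤ) + 1) = (r:ℤ) by omega,
            Int.toNat_of_nonneg hin.1] at hp
          simpa using hp
    have hV : ∀ c : ℤ, Ev y (r:ℤ) c = 0 := by
      intro c
      by_cases hin : 0 ≤ c ∧ c < (j:ℤ) - 1 ∧ (r:ℤ) < (j:ℤ) - 1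
      case neg => exact dif_neg (by omega)
      case pos =>
        have hv := hA (⟨r, by omega⟩, ⟨c.toNat, by omega⟩)
        rw [Asum_ext] at hv
        dsimp only at hv
        rw [hH _, hH _] at hv
        have hprev : Ev y ((r:ℤ) - 1) (c.toNat : ℤ) = 0 := by
          rcases Nat.eq_zero_or_pos r with h0r | h1r
          · subst h0r
            exact dif_neg (by omega)
          · rw [show ((r:ℤ) - 1) = ((r - 1 : ℕ) : ℤ) by omega]
            exact (IH (r-1) (by omega)).2 _
        rw [hprev, Int.toNat_of_nonneg hin.1] at hv
        simpa using hv
    exact ⟨hH, hV⟩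
  funext e
  match e with
  | .inl (r, c) =>
    have h := (main r.1).1 (c.1 : ℤ)
    unfold Eh at h
    rw [dif_pos ⟨by omega, by omega, by omega, by omega⟩] at h
    simpa using h
  | .inr (s, c) =>
    have hsb := s.2
    have hcb := c.2
    have h := (main s.1).2 (c.1 : ℤ)
    unfold Ev at h
    rw [dif_pos ⟨by omega, by omega, by omega, by omega⟩] at h
    simpa using h

end SqY
/-- The `Y`-code of the standard `j×j` surface code has dimension exactly `j` over `F₂`,
and every codeword is uniquely determined by its restriction to the top row of
horizontal edges. -/
theorem square_Ycode_dim_and_topRow (j : ℕ) (hj : 1 ≤ j) :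
    Module.finrank (ZMod 2) (Ycode j j) = j ∧
    (∀ y ∈ Ycode j j, ∀ z ∈ Ycode j j,
      (∀ c : Fin j, y (.inl (⟨0, by omega⟩, c)) = z (.inl (⟨0, by omega⟩, c))) →
      y = z) := by
  have uniq : ∀ y ∈ Ycode j j, ∀ z ∈ Ycode j j,
      (∀ c : Fin j, y (.inl (⟨0, by omega⟩, c)) = z (.inl (⟨0, by omega⟩, c))) →
      y = z := by
    intro y hy z hz htop
    have hsub : y - z ∈ Ycode j j := sub_mem hy hz
    have h0 : ∀ c : Fin j, (y - z) (.inl (⟨0, by omega⟩, c)) = 0 := by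
      intro c
      simp only [Pi.sub_apply]
      rw [htop c]
      ring
    exact sub_eq_zero.mp (SqY.eq_zero_of_top_zero hj (y - z) hsub h0)
  refine ⟨?_, uniq⟩
  let π : Ycode j j →ₗ[ZMod 2] (Fin j → ZMod 2) :=
    { toFun := fun y c => y.1 (.inl (⟨0, by omega⟩, c))
      map_add' := fun y z => rfl
      map_smul' := fun m y => rfl }
  have hbij : Function.Bijective π := by
    constructor
    · intro y z h
      exact Subtype.ext (uniq y.1 y.2 z.1 z.2 fun c => congrFun h c)
    · intro a
      exact ⟨⟨SqY.yconf a, SqY.yconf_mem hj a⟩,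
        funext fun c => SqY.yconf_top hj a c (by omega)⟩
  rw [(LinearEquiv.ofBijective π hbij).finrank_eq, Module.finrank_fin_fun]
end

section
/- For the rotated j×k surface code with j and k odd, the all-Y operator Y^{⊗n} (n = jk) is the unique nontrivial Y-type operator commuting with all stabilizer generators; hence the code has exactly one Y-type logical operator, no nontrivial Y-type stabilizers, and Y-distance d_Y = n. -/
/-- Commutation of a `Y`-type operator with support `α` (on the `j × k` grid of qubits of
the rotated surface code, qubit `(r, c)` for `r < j`, `c < k`) with all stabilizer
generators: weight-4 bulk checks on each unit face, and weight-2 boundary checks, which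
alternate along the boundary (top boundary at even columns, bottom at odd columns, left
at odd rows, right at even rows).  A `Y`-type operator commutes with an `X`- or `Z`-type
check iff the number of `Y`'s on the support of the check is even. -/
def RotatedYCommutes (j k : ℕ) (α : ℕ → ℕ → ZMod 2) : Prop :=
  (∀ r c, r + 1 < j → c + 1 < k →
    α r c + α r (c + 1) + α (r + 1) c + α (r + 1) (c + 1) = 0) ∧
  (∀ c, c % 2 = 0 → c + 1 < k → α 0 c + α 0 (c + 1) = 0) ∧
  (∀ c, c % 2 = 1 → c + 1 < k → α (j - 1) c + α (j - 1) (c + 1) = 0) ∧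
  (∀ r, r % 2 = 1 → r + 1 < j → α r 0 + α (r + 1) 0 = 0) ∧
  (∀ r, r % 2 = 0 → r + 1 < j → α r (k - 1) + α (r + 1) (k - 1) = 0)

private lemma z2aux : ∀ a b : ZMod 2, a + b = 0 → a = b := by decide

private lemma z4aux : ∀ a b c d : ZMod 2, a + b + c + d = 0 → a + b = c + d := by decide

/-- For the rotated `j×k` surface code with `j` and `k` odd, the all-`Y` operator
`Y^{⊗n}` (`n = jk`) commutes with all stabilizer generators, and every `Y`-type operator
commuting with all stabilizer generators is (on the grid) either the identity or
`Y^{⊗n}`: the code has exactly one `Y`-type logical operator, no nontrivial `Y`-type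
stabilizers, and `Y`-distance `d_Y = n`. -/
theorem rotated_unique_Y_logical (j k : ℕ) (hj : Odd j) (hk : Odd k) :
    RotatedYCommutes j k (fun _ _ => 1) ∧
    (∀ α : ℕ → ℕ → ZMod 2, RotatedYCommutes j k α →
      (∀ r c, r < j → c < k → α r c = 0) ∨ (∀ r c, r < j → c < k → α r c = 1)) := by
  constructor
  · refine ⟨fun _ _ _ _ => ?_, fun _ _ _ => ?_, fun _ _ _ => ?_,
      fun _ _ _ => ?_, fun _ _ _ => ?_⟩
    · show (1 : ZMod 2) + 1 + 1 + 1 = 0; decide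
    · show (1 : ZMod 2) + 1 = 0; decide
    · show (1 : ZMod 2) + 1 = 0; decide
    · show (1 : ZMod 2) + 1 = 0; decide
    · show (1 : ZMod 2) + 1 = 0; decide
  · intro α hα
    obtain ⟨hb, ht, hbot, hl, hr⟩ := hα
    have hj1 : 0 < j := hj.pos
    have hk1 : 0 < k := hk.pos
    -- the pairwise row sums are constant down columns
    have hs : ∀ c, c + 1 < k → ∀ r, r < j →
        α r c + α r (c + 1) = α 0 c + α 0 (c + 1) := by
      intro c hc r
      induction r with
      | zero => intro _; rfl
      | succ n ih =>
        intro h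
        rw [← ih (Nat.lt_of_succ_lt h)]
        exact (z4aux _ _ _ _ (hb n c h hc)).symm
    -- every row is constant
    have hrow : ∀ r c, r < j → c + 1 < k → α r c = α r (c + 1) := by
      intro r c hrj hc
      apply z2aux
      rcases Nat.even_or_odd c with he | ho
      · rw [hs c hc r hrj]; exact ht c (Nat.even_iff.mp he) hc
      · have hjj : j - 1 < j := Nat.sub_lt hj1 one_pos
        rw [hs c hc r hrj, ← hs c hc (j - 1) hjj]
        exact hbot c (Nat.odd_iff.mp ho) hc
    have hrow0 : ∀ r c, r < j → c < k → α r c = α r 0 := by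
      intro r c hrj
      induction c with
      | zero => intro _; rfl
      | succ n ih =>
        intro h
        rw [← hrow r n hrj h]
        exact ih (Nat.lt_of_succ_lt h)
    -- column 0 is constant
    have hcol : ∀ r, r + 1 < j → α r 0 = α (r + 1) 0 := by
      intro r h
      rcases Nat.even_or_odd r with he | ho
      · have hk' : k - 1 < k := Nat.sub_lt hk1 one_pos
        have h1 := z2aux _ _ (hr r (Nat.even_iff.mp he) h)
        rw [← hrow0 r (k - 1) (Nat.lt_of_succ_lt h) hk',
          ← hrow0 (r + 1) (k - 1) h hk']
        exact h1
      · exact z2aux _ _ (hl r (Nat.odd_iff.mp ho) h)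
    have hall : ∀ r, r < j → α r 0 = α 0 0 := by
      intro r
      induction r with
      | zero => intro _; rfl
      | succ n ih =>
        intro h
        rw [← hcol n h]
        exact ih (Nat.lt_of_succ_lt h)
    have key : ∀ r c, r < j → c < k → α r c = α 0 0 := by
      intro r c hrj hck
      rw [hrow0 r c hrj hck, hall r hrj]
    have hv : α 0 0 = 0 ∨ α 0 0 = 1 := by
      have : ∀ x : ZMod 2, x = 0 ∨ x = 1 := by decide
      exact this _
    rcases hv with h0 | h1
    · exact Or.inl fun r c hrj hck => by rw [key r c hrj hck, h0]
    · exact Or.inr fun r c hrj hck => by rw [key r c hrj hck, h1]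
end

section
/- The X-distance of the standard j×k surface code is j: every X-type logical operator has weight at least j, and there exists one of weight exactly j. -/
section AUX
lemma z2_cases (a : ZMod 2) : a = 0 ∨ a = 1 := by revert a; decide

lemma z2_add_self (a : ZMod 2) : a + a = 0 := by revert a; decide

lemma z2_add_eq_zero {a b : ZMod 2} (h : a + b = 0) : a = b := by
  revert h; revert a b; decide

lemma sum_ite_fin {n : ℕ} (g : Fin n → ZMod 2) (a : ℕ) (ha : a < n) :
    (∑ i : Fin n, if i.1 = a then g i else 0) = g ⟨a, ha⟩ := by
  rw [Finset.sum_eq_single (⟨a, ha⟩ : Fin n)]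
  · simp
  · intro b _ hb; rw [if_neg (fun hh => hb (Fin.ext hh))]
  · simp

lemma sum_ite_fin_zero {n : ℕ} (g : Fin n → ZMod 2) (a : ℕ) (ha : ¬ a < n) :
    (∑ i : Fin n, if i.1 = a then g i else 0) = 0 :=
  Finset.sum_eq_zero fun i _ => if_neg (by have := i.2; omega)

lemma ite_or_add {A B : Prop} [Decidable A] [Decidable B] (h : ¬(A ∧ B)) (t : ZMod 2) :
    (if A ∨ B then t else 0) = (if A then t else 0) + (if B then t else 0) := by
  split_ifs <;> first | rfl | tauto | simp

lemma sum_ite_fin' {n : ℕ} (g : Fin n → ZMod 2) (a : ℕ) (ha : a < n) :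
    (∑ i : Fin n, if a = i.1 then g i else 0) = g ⟨a, ha⟩ := by
  rw [← sum_ite_fin g a ha]
  exact Finset.sum_congr rfl fun i _ => if_congr eq_comm rfl rfl

lemma sum_ite_fin_and {n : ℕ} (g : Fin n → ZMod 2) (a : ℕ) (P : ℕ → Prop)
    [DecidablePred P] :
    (∑ i : Fin n, if i.1 = a ∧ P i.1 then g i else 0)
      = if h : a < n ∧ P a then g ⟨a, h.1⟩ else 0 := by
  split_ifs with h
  · rw [← sum_ite_fin g a h.1]
    have key : ∀ i : Fin n, ((i.1 = a ∧ P i.1) ↔ i.1 = a) := by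
      intro i
      constructor
      · exact And.left
      · intro hh
        exact ⟨hh, by rw [hh]; exact h.2⟩
    exact Finset.sum_congr rfl fun i _ => if_congr (key i) rfl rfl
  · refine Finset.sum_eq_zero fun i _ => if_neg ?_
    rintro ⟨h1, h2⟩
    exact h ⟨h1 ▸ i.2, h1 ▸ h2⟩

lemma sum_ite_fin'_zero {n : ℕ} (g : Fin n → ZMod 2) (a : ℕ) (ha : ¬ a < n) :
    (∑ i : Fin n, if a = i.1 then g i else 0) = 0 :=
  Finset.sum_eq_zero fun i _ => if_neg (by have := i.2; omega)

lemma sum_ite_fin'_d {n : ℕ} (g : Fin n → ZMod 2) (a : ℕ) :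
    (∑ i : Fin n, if a = i.1 then g i else 0) = if h : a < n then g ⟨a, h⟩ else 0 := by
  split_ifs with h
  · exact sum_ite_fin' g a h
  · exact sum_ite_fin'_zero g a h

lemma sum_ite_fin_succ {n : ℕ} (g : Fin n → ZMod 2) (a : ℕ) :
    (∑ i : Fin n, if a = i.1 + 1 then g i else 0)
      = if h : a - 1 < n ∧ 1 ≤ a then g ⟨a - 1, h.1⟩ else 0 := by
  split_ifs with h
  · rw [← sum_ite_fin g (a - 1) h.1]
    exact Finset.sum_congr rfl fun i _ => if_congr (by omega) rfl rfl
  · refine Finset.sum_eq_zero fun i _ => if_neg ?_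
    have := i.2; omega

lemma ite_add_add (C : Prop) [Decidable C] (a b c : ZMod 2) :
    (if C then a + b + c else 0)
      = (if C then a else 0) + (if C then b else 0) + (if C then c else 0) := by
  split_ifs <;> simp

lemma ite_sum {α : Type*} (C : Prop) [Decidable C] (s : Finset α) (g : α → ZMod 2) :
    (if C then ∑ i ∈ s, g i else 0) = ∑ i ∈ s, if C then g i else 0 := by
  split_ifs <;> simp

lemma z2_solve {a b t : ZMod 2} (h : a + b + t = 0) : t = b + a := by
  revert h; revert a b t; decide

variable {j k : ℕ}

/-- Row sum functional (pairing with the logical Z on row `r`). -/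
def Lrow (r : Fin j) (x : SurfEdge j k → ZMod 2) : ZMod 2 :=
  ∑ c : Fin k, x (.inl (r, c))

lemma Bsum_eq (p : SurfPlaq j k) (x : SurfEdge j k → ZMod 2) :
    Bsum p x = x (.inl (⟨p.1.1, by have := p.1.2; omega⟩, p.2))
      + x (.inl (⟨p.1.1 + 1, by have := p.1.2; omega⟩, p.2))
      + ∑ c' : Fin (k - 1),
          ((if c'.1 + 1 = p.2.1 then x (.inr (p.1, c')) else 0)
          + (if c'.1 = p.2.1 then x (.inr (p.1, c')) else 0)) := by
  rw [Bsum, Fintype.sum_sum_type]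
  congr 1
  · -- horizontal part
    rw [Fintype.sum_prod_type]
    simp only [pInd, ite_mul, one_mul, zero_mul, ite_and]
    simp only [Finset.sum_ite_eq', Finset.mem_univ, if_true]
    rw [Finset.sum_congr rfl (fun r _ => ite_or_add (by omega) _),
      Finset.sum_add_distrib,
      sum_ite_fin (fun r => x (.inl (r, p.2))) p.1.1 (by have := p.1.2; omega),
      sum_ite_fin (fun r => x (.inl (r, p.2))) (p.1.1 + 1) (by have := p.1.2; omega)]
  · -- vertical part
    rw [Fintype.sum_prod_type_right]
    simp only [pInd, ite_mul, one_mul, zero_mul, ite_and]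
    simp only [Finset.sum_ite_eq', Finset.mem_univ, if_true]
    exact Finset.sum_congr rfl (fun c' _ => ite_or_add (by omega) _)

lemma Lrow_vInd (r : Fin j) (v : SurfVertex j k) : Lrow r (vInd v) = 0 := by
  unfold Lrow
  simp only [vInd]
  by_cases h : r = v.1
  · have step : ∀ c : Fin k,
        (if r = v.1 ∧ (c.1 = v.2.1 ∨ c.1 = v.2.1 + 1) then (1 : ZMod 2) else 0)
          = (if c.1 = v.2.1 then 1 else 0) + (if c.1 = v.2.1 + 1 then 1 else 0) := fun c => by
      simp only [h, eq_self_iff_true, true_and]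
      rw [ite_or_add (by omega) (1 : ZMod 2)]
    rw [Finset.sum_congr rfl (fun c _ => step c), Finset.sum_add_distrib,
      sum_ite_fin (n := k) (fun _ => (1 : ZMod 2)) v.2.1 (by have := v.2.2; omega),
      sum_ite_fin (n := k) (fun _ => (1 : ZMod 2)) (v.2.1 + 1) (by have := v.2.2; omega)]
    decide
  · exact Finset.sum_eq_zero fun c _ => if_neg (fun hh => h hh.1)

lemma Lrow_span_zero (r : Fin j) {x : SurfEdge j k → ZMod 2}
    (hx : x ∈ Submodule.span (ZMod 2) (Set.range (vInd (j := j) (k := k)))) :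
    Lrow r x = 0 := by
  induction hx using Submodule.span_induction with
  | mem y hy => obtain ⟨v, rfl⟩ := hy; exact Lrow_vInd r v
  | zero => simp [Lrow]
  | add y z _ _ hy hz =>
      simp only [Lrow, Pi.add_apply, Finset.sum_add_distrib] at *
      rw [hy, hz, add_zero]
  | smul c y _ hy =>
      simp only [Lrow, Pi.smul_apply, smul_eq_mul, ← Finset.mul_sum] at *
      rw [hy, mul_zero]

lemma Lrow_step (x : SurfEdge j k → ZMod 2) (hB : ∀ p, Bsum p x = 0) (s : Fin (j - 1)) :
    Lrow ⟨s.1, by have := s.2; omega⟩ x = Lrow ⟨s.1 + 1, by have := s.2; omega⟩ x := by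
  have h0 : ∑ c : Fin k, Bsum (s, c) x = 0 := by
    simp [hB]
  apply z2_add_eq_zero
  rw [← h0, Finset.sum_congr rfl (fun c _ => Bsum_eq (s, c) x),
    Finset.sum_add_distrib, Finset.sum_add_distrib]
  have hV : ∑ c : Fin k, ∑ c' : Fin (k - 1),
      ((if c'.1 + 1 = c.1 then x (.inr (s, c')) else 0)
        + (if c'.1 = c.1 then x (.inr (s, c')) else 0)) = 0 := by
    rw [Finset.sum_comm]
    refine Finset.sum_eq_zero fun c' _ => ?_
    rw [Finset.sum_add_distrib,
      sum_ite_fin' (fun _ => x (.inr (s, c'))) (c'.1 + 1) (by have := c'.2; omega),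
      sum_ite_fin' (fun _ => x (.inr (s, c'))) c'.1 (by have := c'.2; omega)]
    exact z2_add_self _
  rw [hV, add_zero]
  rfl

lemma Lrow_const (x : SurfEdge j k → ZMod 2) (hB : ∀ p, Bsum p x = 0) (hj : 0 < j)
    (r : Fin j) : Lrow r x = Lrow ⟨0, hj⟩ x := by
  obtain ⟨m, hm⟩ := r
  induction m with
  | zero => rfl
  | succ n ih =>
      have hs : n < j - 1 := by omega
      have hstep := Lrow_step x hB ⟨n, hs⟩
      rw [← hstep]
      exact ih (by omega)

/-- The prefix-sum potential used to write a cycle with zero row sums as a boundary. -/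
def bnd (x : SurfEdge j k → ZMod 2) (v : SurfVertex j k) : ZMod 2 :=
  ∑ c : Fin k, if c.1 ≤ v.2.1 then x (.inl (v.1, c)) else 0

lemma mem_span_of (x : SurfEdge j k → ZMod 2) (hB : ∀ p, Bsum p x = 0)
    (hL : ∀ r, Lrow r x = 0) :
    x ∈ Submodule.span (ZMod 2) (Set.range (vInd (j := j) (k := k))) := by
  have hx : x = ∑ v : SurfVertex j k, bnd x v • vInd v := by
    funext e
    rw [Finset.sum_apply]
    simp only [Pi.smul_apply, smul_eq_mul]
    cases e with
    | inl rc =>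
        obtain ⟨r, c⟩ := rc
        simp only [vInd, mul_ite, mul_one, mul_zero]
        rw [Fintype.sum_prod_type_right]
        simp only [ite_and]
        simp only [Finset.sum_ite_eq, Finset.mem_univ, if_true]
        rw [Finset.sum_congr rfl (fun w _ => ite_or_add (by omega)
            (bnd x (r, w))),
          Finset.sum_add_distrib,
          sum_ite_fin'_d (fun w => bnd x (r, w)) c.1,
          sum_ite_fin_succ (fun w => bnd x (r, w)) c.1]
        by_cases h1 : c.1 < k - 1 <;> by_cases h2 : 1 ≤ c.1
        · -- interior column
          rw [dif_pos h1, dif_pos (show c.1 - 1 < k - 1 ∧ 1 ≤ c.1 from ⟨by omega, h2⟩)]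
          rw [← sum_ite_fin (fun c' => x (.inl (r, c'))) c.1 c.2]
          simp only [bnd]
          rw [← Finset.sum_add_distrib]
          refine Finset.sum_congr rfl fun c' _ => ?_
          split_ifs <;>
            first
              | rfl
              | omega
              | simp
              | exact (z2_add_self _).symm
        · -- leftmost column
          rw [dif_pos h1, dif_neg (by omega), add_zero]
          rw [← sum_ite_fin (fun c' => x (.inl (r, c'))) c.1 c.2]
          simp only [bnd]
          refine Finset.sum_congr rfl fun c' _ => if_congr (by omega) rfl rfl
        · -- rightmost column
          rw [dif_neg h1, dif_pos (show c.1 - 1 < k - 1 ∧ 1 ≤ c.1 from ⟨by omega, h2⟩),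
            zero_add]
          refine z2_add_eq_zero ?_
          have hkey : x (Sum.inl (r, c)) + bnd x (r, ⟨c.1 - 1, by omega⟩) = Lrow r x := by
            rw [← sum_ite_fin (fun c' => x (.inl (r, c'))) c.1 c.2]
            simp only [bnd, Lrow]
            rw [← Finset.sum_add_distrib]
            refine Finset.sum_congr rfl fun c' _ => ?_
            have := c'.2
            split_ifs <;> first | omega | simp
          rw [hkey, hL r]
        · -- k = 1
          rw [dif_neg h1, dif_neg (by omega), add_zero]
          have hkey : Lrow r x = x (Sum.inl (r, c)) := by
            unfold Lrow
            rw [Finset.sum_eq_single c]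
            · intro b _ hb
              exfalso; exact hb (Fin.ext (by have := b.2; have := c.2; omega))
            · simp
          rw [← hkey, hL r]
    | inr sc =>
        obtain ⟨s, c⟩ := sc
        simp only [vInd, mul_ite, mul_one, mul_zero]
        rw [Fintype.sum_prod_type]
        simp only [ite_and]
        simp only [Finset.sum_ite_eq, Finset.mem_univ, if_true]
        rw [Finset.sum_congr rfl (fun r' _ => ite_or_add (by omega)
            (bnd x (r', c))),
          Finset.sum_add_distrib,
          sum_ite_fin' (fun r' => bnd x (r', c)) (s.1 + 1) (by have := s.2; omega),
          sum_ite_fin' (fun r' => bnd x (r', c)) s.1 (by have := s.2; omega)]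
        have h0 : ∑ c'' : Fin k, (if c''.1 ≤ c.1 then Bsum (s, c'') x else 0) = 0 :=
          Finset.sum_eq_zero fun c'' _ => by rw [hB (s, c'')]; simp
        simp only [Bsum_eq, ite_add_add, ite_sum, Finset.sum_add_distrib] at h0
        have hTV : (∑ c'' : Fin k, if c''.1 ≤ c.1 then
              ((∑ c' : Fin (k - 1), if c'.1 + 1 = c''.1 then x (Sum.inr (s, c')) else 0) +
                ∑ c' : Fin (k - 1), if c'.1 = c''.1 then x (Sum.inr (s, c')) else 0) else 0)
            = x (Sum.inr (s, c)) := by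
          have step1 : ∀ c'' : Fin k, (if c''.1 ≤ c.1 then
              ((∑ c' : Fin (k - 1), if c'.1 + 1 = c''.1 then x (Sum.inr (s, c')) else 0) +
                ∑ c' : Fin (k - 1), if c'.1 = c''.1 then x (Sum.inr (s, c')) else 0) else 0)
              = ∑ c' : Fin (k - 1),
                  ((if c''.1 = c'.1 + 1 ∧ c''.1 ≤ c.1 then x (Sum.inr (s, c')) else 0)
                    + (if c''.1 = c'.1 ∧ c''.1 ≤ c.1 then x (Sum.inr (s, c')) else 0)) := by
            intro c''
            rw [← Finset.sum_add_distrib, ite_sum]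
            refine Finset.sum_congr rfl fun c' _ => ?_
            split_ifs <;> first | omega | simp
          rw [Finset.sum_congr rfl (fun c'' _ => step1 c''), Finset.sum_comm]
          have step2 : ∀ c' : Fin (k - 1),
              (∑ c'' : Fin k,
                ((if c''.1 = c'.1 + 1 ∧ c''.1 ≤ c.1 then x (Sum.inr (s, c')) else 0)
                  + (if c''.1 = c'.1 ∧ c''.1 ≤ c.1 then x (Sum.inr (s, c')) else 0)))
              = (if c'.1 = c.1 then x (Sum.inr (s, c')) else 0) := by
            intro c'
            rw [Finset.sum_add_distrib,
              sum_ite_fin_and (n := k) (fun _ => x (Sum.inr (s, c'))) (c'.1 + 1)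
                (fun m => m ≤ c.1),
              sum_ite_fin_and (n := k) (fun _ => x (Sum.inr (s, c'))) c'.1
                (fun m => m ≤ c.1)]
            have h1 := c'.2
            have h2 := c.2
            split_ifs <;> first | omega | simp | exact z2_add_self _
          rw [Finset.sum_congr rfl (fun c' _ => step2 c'),
            sum_ite_fin (fun c' => x (Sum.inr (s, c'))) c.1 c.2]
        rw [hTV] at h0
        exact z2_solve h0
  rw [hx]
  exact Submodule.sum_mem _ fun v _ =>
    Submodule.smul_mem _ _ (Submodule.subset_span ⟨v, rfl⟩)

end AUX

/-- The `X`-distance of the standard `j×k` surface code is `j`: every `X`-type logical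
operator (an `X`-configuration commuting with all plaquette stabilizers that is not a
product of vertex stabilizers) has weight at least `j`, and there exists one of weight
exactly `j`. -/
theorem surface_X_distance (j k : ℕ) (hj : 1 ≤ j) (hk : 1 ≤ k) :
    IsLeast {w | ∃ x : SurfEdge j k → ZMod 2,
      (∀ p, Bsum p x = 0) ∧
        x ∉ Submodule.span (ZMod 2) (Set.range (vInd (j := j) (k := k))) ∧
        swt x = w} j := by
  constructor
  · -- membership: the column of X's in column 0
    set x₀ : SurfEdge j k → ZMod 2 :=
      Sum.elim (fun rc => if rc.2.1 = 0 then (1 : ZMod 2) else 0) (fun _ => 0) with hx₀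
    refine ⟨x₀, ?_, ?_, ?_⟩
    · intro p
      rw [Bsum_eq]
      simp only [hx₀, Sum.elim_inl, Sum.elim_inr, ite_self, add_zero,
        Finset.sum_const_zero]
      exact z2_add_self _
    · intro hsp
      have h0 := Lrow_span_zero ⟨0, hj⟩ hsp
      have h1 : Lrow (j := j) (k := k) ⟨0, hj⟩ x₀ = 1 := by
        unfold Lrow
        simp only [hx₀, Sum.elim_inl]
        exact sum_ite_fin (n := k) (fun _ => (1 : ZMod 2)) 0 hk
      rw [h1] at h0
      exact one_ne_zero h0
    · unfold swt
      have hset : (Finset.univ.filter fun e => x₀ e = 1)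
          = Finset.univ.map ⟨fun r : Fin j => (Sum.inl (r, ⟨0, hk⟩) : SurfEdge j k),
              fun a b h => by simpa using h⟩ := by
        ext e
        simp only [Finset.mem_filter, Finset.mem_univ, true_and, Finset.mem_map,
          Function.Embedding.coeFn_mk]
        cases e with
        | inl rc =>
            obtain ⟨r, c⟩ := rc
            simp only [hx₀, Sum.elim_inl]
            constructor
            · intro h
              have hc : c = ⟨0, hk⟩ := by
                by_contra hcc
                rw [if_neg (fun h0 => hcc (Fin.ext h0))] at h
                exact absurd h (by decide)
              exact ⟨r, by rw [hc]; rfl⟩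
            · rintro ⟨r', hr'⟩
              change Sum.inl (r', ⟨0, hk⟩) = Sum.inl (r, c) at hr'
              simp only [Sum.inl.injEq, Prod.mk.injEq] at hr'
              rw [if_pos (by rw [← hr'.2])]
        | inr sc =>
            simp [hx₀]
      rw [hset, Finset.card_map, Finset.card_univ, Fintype.card_fin]
  · -- lower bound
    rintro w ⟨x, hB, hns, rfl⟩
    by_contra hlt
    push_neg at hlt
    have hex : ∃ r : Fin j, ∀ c : Fin k, x (.inl (r, c)) = 0 := by
      by_contra hc
      push_neg at hc
      choose g hg using hc
      have hinj : Function.Injective (fun r : Fin j => (Sum.inl (r, g r) : SurfEdge j k)) := by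
        intro a b hab
        simp only [Sum.inl.injEq, Prod.mk.injEq] at hab
        exact hab.1
      have hsub : ∀ r ∈ (Finset.univ : Finset (Fin j)),
          (Sum.inl (r, g r) : SurfEdge j k) ∈ Finset.univ.filter fun e => x e = 1 := by
        intro r _
        simp only [Finset.mem_filter, Finset.mem_univ, true_and]
        rcases z2_cases (x (Sum.inl (r, g r))) with h | h
        · exact absurd h (hg r)
        · exact h
      have hcard := Finset.card_le_card_of_injOn _ hsub hinj.injOn
      rw [Finset.card_univ, Fintype.card_fin] at hcard
      unfold swt at hlt
      omega
    obtain ⟨r, hr⟩ := hex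
    have hr0 : Lrow r x = 0 := by
      unfold Lrow
      simp [hr]
    have hLall : ∀ r', Lrow r' x = 0 := fun r' => by
      rw [Lrow_const x hB (by omega) r', ← Lrow_const x hB (by omega) r, hr0]
    exact hns (mem_span_of x hB hLall)
end

section
/- The group generated by the two diagonal reflections of the j×j surface code lattice is isomorphic to Z_2 × Z_2, and its action on the set of edges has exactly one orbit of size 1, exactly 2(j−1) orbits of size 2, and all remaining orbits of size 4; consequently the number of orbits is j(j+1)/2. -/
/-- Edges (physical qubits) of the standard `j×j` surface code lattice: `j²` horizontal
edges and `(j-1)²` vertical edges. -/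
abbrev SqEdge (j : ℕ) := (Fin j × Fin j) ⊕ (Fin (j - 1) × Fin (j - 1))

/-- Reflection of the `j×j` surface code lattice across the main diagonal `δ¹`. -/
def diagRefl1 (j : ℕ) : Equiv.Perm (SqEdge j) :=
  Function.Involutive.toPerm
    (fun e => match e with
      | .inl (r, c) => .inl (c, r)
      | .inr (s, t) => .inr (t, s))
    (by rintro (⟨r, c⟩ | ⟨s, t⟩) <;> rfl)

/-- Reflection of the `j×j` surface code lattice across the antidiagonal `δ^(j+1)`. -/
def diagRefl2 (j : ℕ) : Equiv.Perm (SqEdge j) :=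
  Function.Involutive.toPerm
    (fun e => match e with
      | .inl (r, c) => .inl (c.rev, r.rev)
      | .inr (s, t) => .inr (t.rev, s.rev))
    (by rintro (⟨r, c⟩ | ⟨s, t⟩) <;> simp)

/-- The group `R` generated by the two diagonal reflections of the `j×j` lattice. -/
def reflGroup (j : ℕ) : Subgroup (Equiv.Perm (SqEdge j)) :=
  Subgroup.closure {diagRefl1 j, diagRefl2 j}

section
variable (j : ℕ)

@[simp] lemma A_inl (r c : Fin j) : diagRefl1 j (.inl (r, c)) = .inl (c, r) := rfl
@[simp] lemma A_inr (s t : Fin (j-1)) : diagRefl1 j (.inr (s, t)) = .inr (t, s) := rfl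
@[simp] lemma B_inl (r c : Fin j) : diagRefl2 j (.inl (r, c)) = .inl (c.rev, r.rev) := rfl
@[simp] lemma B_inr (s t : Fin (j-1)) : diagRefl2 j (.inr (s, t)) = .inr (t.rev, s.rev) := rfl

lemma hA2 : diagRefl1 j * diagRefl1 j = 1 := by
  ext e; rcases e with ⟨r, c⟩ | ⟨s, t⟩ <;> simp

lemma hB2 : diagRefl2 j * diagRefl2 j = 1 := by
  ext e; rcases e with ⟨r, c⟩ | ⟨s, t⟩ <;> simp

lemma hcomm : diagRefl1 j * diagRefl2 j = diagRefl2 j * diagRefl1 j := by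
  ext e; rcases e with ⟨r, c⟩ | ⟨s, t⟩ <;> simp

lemma mem_reflGroup_iff (g : Equiv.Perm (SqEdge j)) :
    g ∈ reflGroup j ↔ g = 1 ∨ g = diagRefl1 j ∨ g = diagRefl2 j ∨
      g = diagRefl1 j * diagRefl2 j := by
  constructor
  · intro hg
    induction hg using Subgroup.closure_induction with
    | mem x hx =>
        rcases hx with rfl | rfl
        · exact Or.inr (Or.inl rfl)
        · exact Or.inr (Or.inr (Or.inl rfl))
    | one => exact Or.inl rfl
    | mul x y hx hy ihx ihy =>
        rcases ihx with rfl | rfl | rfl | rfl <;> rcases ihy with rfl | rfl | rfl | rfl <;>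
          first
          | (refine Or.inl ?_; ext e; (rcases e with ⟨r, c⟩ | ⟨s, t⟩ <;>
              simp [Equiv.Perm.mul_apply]); done)
          | (refine Or.inr (Or.inl ?_); ext e; (rcases e with ⟨r, c⟩ | ⟨s, t⟩ <;>
              simp [Equiv.Perm.mul_apply]); done)
          | (refine Or.inr (Or.inr (Or.inl ?_)); ext e; (rcases e with ⟨r, c⟩ | ⟨s, t⟩ <;>
              simp [Equiv.Perm.mul_apply]); done)
          | (refine Or.inr (Or.inr (Or.inr ?_)); ext e; (rcases e with ⟨r, c⟩ | ⟨s, t⟩ <;>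
              simp [Equiv.Perm.mul_apply]); done)
    | inv x hx ihx =>
        rcases ihx with rfl | rfl | rfl | rfl
        · exact Or.inl (by simp)
        · refine Or.inr (Or.inl ?_); rw [eq_comm, eq_inv_iff_mul_eq_one, hA2]
        · refine Or.inr (Or.inr (Or.inl ?_)); rw [eq_comm, eq_inv_iff_mul_eq_one, hB2]
        · refine Or.inr (Or.inr (Or.inr ?_))
          rw [eq_comm, eq_inv_iff_mul_eq_one, mul_assoc, ← mul_assoc (diagRefl2 j), ← hcomm,
            mul_assoc, hB2, mul_one, hA2]
  · rintro (rfl | rfl | rfl | rfl)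
    · exact one_mem _
    · exact Subgroup.subset_closure (by simp)
    · exact Subgroup.subset_closure (by simp)
    · exact mul_mem (Subgroup.subset_closure (by simp)) (Subgroup.subset_closure (by simp))

end

section
variable {j : ℕ} (hj : 2 ≤ j)
include hj

lemma hA1 : diagRefl1 j ≠ 1 := by
  intro h
  have := congrArg (fun f => f (Sum.inl (⟨0, by omega⟩, ⟨1, by omega⟩) : SqEdge j)) h
  simp [Prod.ext_iff, Fin.ext_iff] at this

lemma hB1 : diagRefl2 j ≠ 1 := by
  intro h
  have := congrArg (fun f => f (Sum.inl (⟨0, by omega⟩, ⟨0, by omega⟩) : SqEdge j)) h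
  simp [Prod.ext_iff, Fin.ext_iff] at this
  omega

lemma hAB1 : diagRefl1 j * diagRefl2 j ≠ 1 := by
  intro h
  have := congrArg (fun f => f (Sum.inl (⟨0, by omega⟩, ⟨0, by omega⟩) : SqEdge j)) h
  simp [Equiv.Perm.mul_apply, Prod.ext_iff, Fin.ext_iff] at this
  omega

end

section
variable (j : ℕ)

private def fA : Multiplicative (ZMod 2) →* Equiv.Perm (SqEdge j) :=
  MonoidHom.mk' (fun x => if x.toAdd = 0 then 1 else diagRefl1 j) (by
    have h2 : ∀ z : ZMod 2, z = 0 ∨ z = 1 := by decide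
    have h11 : (1 + 1 : ZMod 2) = 0 := by decide
    intro x y
    rcases h2 x.toAdd with hx | hx <;> rcases h2 y.toAdd with hy | hy <;>
      simp [toAdd_mul, hx, hy, h11, hA2])

private def fB : Multiplicative (ZMod 2) →* Equiv.Perm (SqEdge j) :=
  MonoidHom.mk' (fun x => if x.toAdd = 0 then 1 else diagRefl2 j) (by
    have h2 : ∀ z : ZMod 2, z = 0 ∨ z = 1 := by decide
    have h11 : (1 + 1 : ZMod 2) = 0 := by decide
    intro x y
    rcases h2 x.toAdd with hx | hx <;> rcases h2 y.toAdd with hy | hy <;>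
      simp [toAdd_mul, hx, hy, h11, hB2])

private def phi : Multiplicative (ZMod 2) × Multiplicative (ZMod 2) →* Equiv.Perm (SqEdge j) :=
  MonoidHom.noncommCoprod (fA j) (fB j) (by
    intro m n
    unfold fA fB Commute SemiconjBy
    simp only [MonoidHom.mk'_apply]
    split_ifs <;> simp [hcomm])

lemma phi_range : (phi j).range = reflGroup j := by
  apply le_antisymm
  · rintro g ⟨⟨x, y⟩, rfl⟩
    have hx : fA j x ∈ reflGroup j := by
      unfold fA; simp only [MonoidHom.mk'_apply]
      split_ifs
      · exact one_mem _
      · exact Subgroup.subset_closure (by simp)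
    have hy : fB j y ∈ reflGroup j := by
      unfold fB; simp only [MonoidHom.mk'_apply]
      split_ifs
      · exact one_mem _
      · exact Subgroup.subset_closure (by simp)
    exact mul_mem hx hy
  · rw [reflGroup, Subgroup.closure_le]
    rintro g (rfl | rfl)
    · exact ⟨(Multiplicative.ofAdd 1, 1), by
        unfold phi fA fB; simp [MonoidHom.noncommCoprod_apply]⟩
    · exact ⟨(1, Multiplicative.ofAdd 1), by
        unfold phi fA fB; simp [MonoidHom.noncommCoprod_apply]⟩

lemma phi_inj (hj : 2 ≤ j) : Function.Injective (phi j) := by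
  rw [injective_iff_map_eq_one]
  rintro ⟨x, y⟩ h
  have h2 : ∀ z : ZMod 2, z = 0 ∨ z = 1 := by decide
  unfold phi at h
  rw [MonoidHom.noncommCoprod_apply] at h
  unfold fA fB at h
  simp only [MonoidHom.noncommCoprod_apply, MonoidHom.mk'_apply] at h
  rcases h2 x.toAdd with hx | hx <;> rcases h2 y.toAdd with hy | hy <;>
    simp only [hx, hy, if_pos, if_neg, one_ne_zero, if_true, if_false, reduceIte,
      one_mul, mul_one] at h
  · exact Prod.ext (by simpa using congrArg Multiplicative.ofAdd hx)
      (by simpa using congrArg Multiplicative.ofAdd hy)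
  · exact absurd h (hB1 hj)
  · exact absurd h (hA1 hj)
  · exact absurd h (hAB1 hj)

lemma refl_iso (hj : 2 ≤ j) :
    Nonempty (reflGroup j ≃* Multiplicative (ZMod 2) × Multiplicative (ZMod 2)) :=
  ⟨(MulEquiv.subgroupCongr (phi_range j).symm).trans
    (MonoidHom.ofInjective (phi_inj j hj)).symm⟩

lemma card_reflGroup (hj : 2 ≤ j) : Nat.card (reflGroup j) = 4 := by
  obtain ⟨e⟩ := refl_iso j hj
  rw [Nat.card_congr e.toEquiv]
  simp [Nat.card_eq_fintype_card]

end

section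
variable (j : ℕ)

open MulAction

lemma orbit_eq (e : SqEdge j) :
    MulAction.orbit (reflGroup j) e =
      {e, diagRefl1 j e, diagRefl2 j e, diagRefl1 j (diagRefl2 j e)} := by
  ext x
  constructor
  · rintro ⟨⟨g, hg⟩, rfl⟩
    rcases (mem_reflGroup_iff j g).1 hg with rfl | rfl | rfl | rfl <;>
      simp [Subgroup.mk_smul, Equiv.Perm.smul_def, Equiv.Perm.mul_apply]
  · have hA : diagRefl1 j ∈ reflGroup j := Subgroup.subset_closure (by simp)
    have hB : diagRefl2 j ∈ reflGroup j := Subgroup.subset_closure (by simp)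
    rintro (rfl | rfl | rfl | rfl)
    · exact MulAction.mem_orbit_self _
    · exact ⟨⟨diagRefl1 j, hA⟩, rfl⟩
    · exact ⟨⟨diagRefl2 j, hB⟩, rfl⟩
    · exact ⟨⟨diagRefl1 j * diagRefl2 j, mul_mem hA hB⟩, rfl⟩

lemma card_orbit_dvd (hj : 2 ≤ j) (e : SqEdge j) :
    Nat.card (MulAction.orbit (reflGroup j) e) ∣ 4 := by
  rw [Nat.card_congr (MulAction.orbitEquivQuotientStabilizer (reflGroup j) e)]
  rw [← card_reflGroup j hj]
  rw [Subgroup.card_eq_card_quotient_mul_card_subgroup (MulAction.stabilizer (reflGroup j) e)]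
  exact Dvd.intro _ rfl

lemma card_orbit_pos (e : SqEdge j) : 0 < Nat.card (MulAction.orbit (reflGroup j) e) :=
  @Nat.card_pos _ ⟨⟨e, MulAction.mem_orbit_self e⟩⟩ _

lemma card_orbit_one (e : SqEdge j) (h1 : diagRefl1 j e = e) (h2 : diagRefl2 j e = e) :
    Nat.card (MulAction.orbit (reflGroup j) e) = 1 := by
  rw [orbit_eq, h1, h2, h1]
  simp [Nat.card_coe_set_eq]

lemma comm_apply (e : SqEdge j) :
    diagRefl1 j (diagRefl2 j e) = diagRefl2 j (diagRefl1 j e) := by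
  have := congrArg (fun f => f e) (hcomm j)
  simpa [Equiv.Perm.mul_apply] using this

lemma card_orbit_two (e : SqEdge j)
    (h : (diagRefl1 j e = e ∨ diagRefl2 j e = e ∨ diagRefl1 j (diagRefl2 j e) = e) ∧
      ¬(diagRefl1 j e = e ∧ diagRefl2 j e = e)) :
    Nat.card (MulAction.orbit (reflGroup j) e) = 2 := by
  rw [orbit_eq, Nat.card_coe_set_eq]
  obtain ⟨h1, h2⟩ := h
  rcases h1 with hA | hB | hAB
  · -- A fixes e, B doesn't
    have hB : diagRefl2 j e ≠ e := fun hB => h2 ⟨hA, hB⟩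
    rw [hA, comm_apply, hA]
    rw [show ({e, e, diagRefl2 j e, diagRefl2 j e} : Set (SqEdge j)) = {e, diagRefl2 j e} by
      ext x; simp <;> tauto]
    exact Set.ncard_pair (Ne.symm hB)
  · -- B fixes e, A doesn't
    have hA : diagRefl1 j e ≠ e := fun hA => h2 ⟨hA, hB⟩
    rw [hB]
    rw [show ({e, diagRefl1 j e, e, diagRefl1 j e} : Set (SqEdge j)) = {e, diagRefl1 j e} by
      ext x; simp <;> tauto]
    exact Set.ncard_pair (Ne.symm hA)
  · -- AB fixes e, A and B don't
    have hA : diagRefl1 j e ≠ e := by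
      intro hA
      apply h2
      refine ⟨hA, ?_⟩
      have := comm_apply j e
      rw [hA] at this
      -- this : diagRefl1 j (diagRefl2 j e) = diagRefl2 j e
      rw [hAB] at this
      exact this.symm
    have hBA : diagRefl2 j e = diagRefl1 j e := by
      have := congrArg (diagRefl1 j) hAB
      have h11 := congrArg (fun f => f (diagRefl2 j e)) (hA2 j)
      simp [Equiv.Perm.mul_apply] at h11
      rw [h11] at this
      exact this
    rw [hAB, hBA]
    rw [show ({e, diagRefl1 j e, diagRefl1 j e, e} : Set (SqEdge j)) = {e, diagRefl1 j e} by
      ext x; simp <;> tauto]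
    exact Set.ncard_pair (Ne.symm hA)

lemma card_orbit_four (e : SqEdge j)
    (hA : diagRefl1 j e ≠ e) (hB : diagRefl2 j e ≠ e) (hAB : diagRefl1 j (diagRefl2 j e) ≠ e) :
    Nat.card (MulAction.orbit (reflGroup j) e) = 4 := by
  rw [orbit_eq, Nat.card_coe_set_eq]
  have hAA : ∀ x, diagRefl1 j (diagRefl1 j x) = x := fun x => by
    have := congrArg (fun f => f x) (hA2 j); simpa [Equiv.Perm.mul_apply] using this
  have hBB : ∀ x, diagRefl2 j (diagRefl2 j x) = x := fun x => by
    have := congrArg (fun f => f x) (hB2 j); simpa [Equiv.Perm.mul_apply] using this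
  have d1 : diagRefl1 j e ≠ diagRefl2 j e := by
    intro h
    apply hAB
    rw [← h, hAA]
  have d2 : diagRefl1 j e ≠ diagRefl1 j (diagRefl2 j e) :=
    fun h => hB ((diagRefl1 j).injective h).symm
  have d3 : diagRefl2 j e ≠ diagRefl1 j (diagRefl2 j e) := by
    intro h
    apply hA
    have := congrArg (diagRefl1 j) h
    rw [hAA] at this
    rw [comm_apply] at this
    have h5 := (diagRefl2 j).injective this
    first
    | exact h5
    | exact h5.symm
  rw [Set.ncard_insert_of_notMem (by simp [Ne.symm hA, Ne.symm hB, Ne.symm hAB])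
    (Set.toFinite _)]
  rw [Set.ncard_insert_of_notMem (by simp [d1, d2]) (Set.toFinite _)]
  rw [Set.ncard_insert_of_notMem (by simp [d3]) (Set.toFinite _)]
  simp

end

section
variable (j : ℕ)

lemma card_orbit_eq_one_iff (e : SqEdge j) :
    Nat.card (MulAction.orbit (reflGroup j) e) = 1 ↔
      (diagRefl1 j e = e ∧ diagRefl2 j e = e) := by
  constructor
  · intro h
    by_contra hcon
    by_cases hor : diagRefl1 j e = e ∨ diagRefl2 j e = e ∨ diagRefl1 j (diagRefl2 j e) = e
    · have := card_orbit_two j e ⟨hor, hcon⟩; omega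
    · push_neg at hor
      have := card_orbit_four j e hor.1 hor.2.1 hor.2.2; omega
  · rintro ⟨h1, h2⟩; exact card_orbit_one j e h1 h2

lemma card_orbit_eq_two_iff (e : SqEdge j) :
    Nat.card (MulAction.orbit (reflGroup j) e) = 2 ↔
      ((diagRefl1 j e = e ∨ diagRefl2 j e = e ∨ diagRefl1 j (diagRefl2 j e) = e) ∧
        ¬(diagRefl1 j e = e ∧ diagRefl2 j e = e)) := by
  constructor
  · intro h
    by_cases hcon : diagRefl1 j e = e ∧ diagRefl2 j e = e
    · have := card_orbit_one j e hcon.1 hcon.2; omega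
    by_cases hor : diagRefl1 j e = e ∨ diagRefl2 j e = e ∨ diagRefl1 j (diagRefl2 j e) = e
    · exact ⟨hor, hcon⟩
    · push_neg at hor
      have := card_orbit_four j e hor.1 hor.2.1 hor.2.2; omega
  · exact card_orbit_two j e

end

lemma fiber_count {G α : Type*} [Group G] [MulAction G α] [Finite α] (k : ℕ) :
    Nat.card {q : MulAction.orbitRel.Quotient G α | Nat.card q.orbit = k} * k
      = Nat.card {e : α | Nat.card (MulAction.orbit G e) = k} := by
  classical
  cases nonempty_fintype α
  haveI : Fintype (MulAction.orbitRel.Quotient G α) := Fintype.ofFinite _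
  set Ω := MulAction.orbitRel.Quotient G α
  set s : Finset α := Finset.univ.filter (fun e => Nat.card (MulAction.orbit G e) = k) with hs_def
  set t : Finset Ω := Finset.univ.filter (fun q => Nat.card q.orbit = k) with ht_def
  have hmap : ∀ e ∈ s, (Quotient.mk'' e : Ω) ∈ t := by
    intro e he
    simp only [hs_def, ht_def, Finset.mem_filter, Finset.mem_univ, true_and,
      MulAction.orbitRel.Quotient.orbit_mk] at *
    exact he
  have hcard := Finset.card_eq_sum_card_fiberwise hmap
  have hfib : ∀ q ∈ t, (s.filter fun e => (Quotient.mk'' e : Ω) = q).card = k := by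
    intro q hq
    simp only [ht_def, Finset.mem_filter, Finset.mem_univ, true_and] at hq
    have h1 : (s.filter fun e => (Quotient.mk'' e : Ω) = q)
        = Finset.univ.filter fun e => (Quotient.mk'' e : Ω) = q := by
      ext e
      simp only [hs_def, Finset.filter_filter, Finset.mem_filter, Finset.mem_univ, true_and]
      constructor
      · exact fun h => h.2
      · intro h
        refine ⟨?_, h⟩
        have horb : MulAction.orbit G e = q.orbit := by
          rw [← h, MulAction.orbitRel.Quotient.orbit_mk]
        rw [horb]
        exact hq
    have h2 : (Finset.univ.filter fun e => (Quotient.mk'' e : Ω) = q) = q.orbit.toFinset := by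
      ext e
      simp [MulAction.orbitRel.Quotient.mem_orbit]
    rw [h1, h2, ← Set.ncard_eq_toFinset_card', ← Nat.card_coe_set_eq]
    exact hq
  have hmain : s.card = t.card * k := by
    rw [hcard, Finset.sum_congr rfl hfib, Finset.sum_const, smul_eq_mul]
  have hs2 : Nat.card {e : α | Nat.card (MulAction.orbit G e) = k} = s.card := by
    rw [Nat.card_coe_set_eq, Set.ncard_eq_toFinset_card', Set.toFinset_setOf]
  have ht2 : Nat.card {q : Ω | Nat.card q.orbit = k} = t.card := by
    rw [Nat.card_coe_set_eq, Set.ncard_eq_toFinset_card', Set.toFinset_setOf]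
  rw [hs2, ht2, hmain]

lemma card_partition {β : Type*} [Fintype β] (f : β → ℕ)
    (hf : ∀ b, f b = 1 ∨ f b = 2 ∨ f b = 4) :
    Nat.card β = Nat.card {b | f b = 1} + Nat.card {b | f b = 2} + Nat.card {b | f b = 4} := by
  classical
  have h1 : ∀ k : ℕ, Nat.card {b | f b = k} = (Finset.univ.filter (fun b => f b = k)).card := by
    intro k
    rw [Nat.card_coe_set_eq, Set.ncard_eq_toFinset_card', Set.toFinset_setOf]
  have huniv : (Finset.univ : Finset β) =
      (Finset.univ.filter (fun b => f b = 1)) ∪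
        ((Finset.univ.filter (fun b => f b = 2)) ∪ (Finset.univ.filter (fun b => f b = 4))) := by
    ext b
    simp only [Finset.mem_univ, Finset.mem_union, Finset.mem_filter, true_and, true_iff]
    exact hf b
  have d1 : Disjoint (Finset.univ.filter (fun b => f b = 2))
      (Finset.univ.filter (fun b => f b = 4)) := by
    rw [Finset.disjoint_left]; intro b hb hb'
    simp only [Finset.mem_filter] at hb hb'; omega
  have d2 : Disjoint (Finset.univ.filter (fun b => f b = 1))
      ((Finset.univ.filter (fun b => f b = 2)) ∪ (Finset.univ.filter (fun b => f b = 4))) := by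
    rw [Finset.disjoint_left]; intro b hb hb'
    simp only [Finset.mem_union, Finset.mem_filter] at hb hb'; omega
  have key : Fintype.card β =
      (Finset.univ.filter (fun b => f b = 1)).card +
        ((Finset.univ.filter (fun b => f b = 2)).card +
          (Finset.univ.filter (fun b => f b = 4)).card) := by
    rw [← Finset.card_univ]
    conv_lhs => rw [huniv]
    rw [Finset.card_union_of_disjoint d2, Finset.card_union_of_disjoint d1]
  rw [h1, h1, h1, Nat.card_eq_fintype_card, key]
  omega

lemma count_fin (k : ℕ) :
    ((Finset.univ : Finset (Fin k × Fin k)).filter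
      (fun p => (p.1 = p.2 ∨ p.1 = p.2.rev ∨ (p.1 = p.1.rev ∧ p.2 = p.2.rev)) ∧
        ¬(p.1 = p.2 ∧ p.1 = p.2.rev))).card = 2 * k - 2 * (k % 2) := by
  classical
  set D := (Finset.univ : Finset (Fin k)).image (fun r => (r, r)) with hD_def
  set Adg := (Finset.univ : Finset (Fin k)).image (fun r => (r, r.rev)) with hA_def
  set M := (Finset.univ : Finset (Fin k)).filter (fun r => 2 * r.val + 1 = k) with hM_def
  have hinj : Function.Injective (fun r : Fin k => (r, r)) := fun a b h => (Prod.ext_iff.1 h).1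
  have hinj2 : Function.Injective (fun r : Fin k => (r, r.rev)) := fun a b h => (Prod.ext_iff.1 h).1
  have hD : D.card = k := by
    rw [hD_def, Finset.card_image_of_injective _ hinj, Finset.card_univ, Fintype.card_fin]
  have hAdg : Adg.card = k := by
    rw [hA_def, Finset.card_image_of_injective _ hinj2, Finset.card_univ, Fintype.card_fin]
  have hDmem : ∀ p : Fin k × Fin k, p ∈ D ↔ p.1 = p.2 := by
    intro p
    simp only [hD_def, Finset.mem_image, Finset.mem_univ, true_and]
    constructor
    · rintro ⟨a, rfl⟩; rfl
    · intro h; exact ⟨p.1, by rw [Prod.ext_iff]; exact ⟨rfl, h⟩⟩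
  have hAmem : ∀ p : Fin k × Fin k, p ∈ Adg ↔ p.2 = p.1.rev := by
    intro p
    simp only [hA_def, Finset.mem_image, Finset.mem_univ, true_and]
    constructor
    · rintro ⟨a, rfl⟩; rfl
    · intro h; exact ⟨p.1, by rw [Prod.ext_iff]; exact ⟨rfl, h.symm⟩⟩
  have hDA : D ∩ Adg = M.image (fun r => (r, r)) := by
    ext p
    have hb1 := p.1.isLt
    have hb2 := p.2.isLt
    simp only [Finset.mem_inter, hDmem, hAmem, Finset.mem_image, hM_def, Finset.mem_filter,
      Finset.mem_univ, true_and, Prod.ext_iff, Fin.ext_iff, Fin.val_rev]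
    constructor
    · rintro ⟨h1, h2⟩
      exact ⟨p.1, by omega, by omega, by omega⟩
    · rintro ⟨a, ha, h1, h2⟩
      have hba := a.isLt
      omega
  have hM : M.card = k % 2 := by
    rcases Nat.even_or_odd k with ⟨m, rfl⟩ | ⟨m, rfl⟩
    · have : M = ∅ := by
        ext r; simp only [hM_def, Finset.mem_filter, Finset.mem_univ, true_and,
          Finset.notMem_empty, iff_false]
        omega
      rw [this]; simp; omega
    · have : M = {⟨m, by omega⟩} := by
        ext r
        obtain ⟨r, hr⟩ := r
        simp only [hM_def, Finset.mem_filter, Finset.mem_univ, true_and,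
          Finset.mem_singleton, Fin.ext_iff]
        omega
      rw [this]; simp
  have hset : ((Finset.univ : Finset (Fin k × Fin k)).filter
      (fun p => (p.1 = p.2 ∨ p.1 = p.2.rev ∨ (p.1 = p.1.rev ∧ p.2 = p.2.rev)) ∧
        ¬(p.1 = p.2 ∧ p.1 = p.2.rev))) = (D ∪ Adg) \ (D ∩ Adg) := by
    ext p
    have hb1 := p.1.isLt
    have hb2 := p.2.isLt
    simp only [Finset.mem_filter, Finset.mem_univ, true_and, Finset.mem_sdiff,
      Finset.mem_union, Finset.mem_inter, hDmem, hAmem, Fin.ext_iff, Fin.val_rev]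
    omega
  rw [hset, Finset.card_sdiff_of_subset (Finset.inter_subset_union)]
  have hU := Finset.card_union_add_card_inter D Adg
  have hI : (D ∩ Adg).card = M.card := by
    rw [hDA, Finset.card_image_of_injective _ hinj]
  have hk : k % 2 ≤ k := Nat.mod_le k 2
  omega

lemma cardS1 (j : ℕ) (hj : 2 ≤ j) :
    Nat.card {e : SqEdge j | Nat.card (MulAction.orbit (reflGroup j) e) = 1} = 1 := by
  have hset : {e : SqEdge j | Nat.card (MulAction.orbit (reflGroup j) e) = 1} =
      {e | diagRefl1 j e = e ∧ diagRefl2 j e = e} := Set.ext (card_orbit_eq_one_iff j)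
  rw [hset]
  rcases Nat.even_or_odd j with ⟨m, hm⟩ | ⟨m, hm⟩
  · have hlt : m - 1 < j - 1 := by omega
    have hone : {e : SqEdge j | diagRefl1 j e = e ∧ diagRefl2 j e = e}
        = {Sum.inr (⟨m - 1, hlt⟩, ⟨m - 1, hlt⟩)} := by
      ext e
      rcases e with ⟨r, c⟩ | ⟨s, t⟩
      · have h1 := r.isLt
        have h2 := c.isLt
        simp only [Set.mem_setOf_eq, A_inl, B_inl, Set.mem_singleton_iff,
          Sum.inl.injEq, Prod.ext_iff, Fin.ext_iff, Fin.val_rev, reduceCtorEq, iff_false,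
          not_and]
        omega
      · have h1 := s.isLt
        have h2 := t.isLt
        simp only [Set.mem_setOf_eq, A_inr, B_inr, Set.mem_singleton_iff,
          Sum.inr.injEq, Prod.ext_iff, Fin.ext_iff, Fin.val_rev]
        omega
    rw [hone, Nat.card_coe_set_eq, Set.ncard_singleton]
  · have hlt : m < j := by omega
    have hone : {e : SqEdge j | diagRefl1 j e = e ∧ diagRefl2 j e = e}
        = {Sum.inl (⟨m, hlt⟩, ⟨m, hlt⟩)} := by
      ext e
      rcases e with ⟨r, c⟩ | ⟨s, t⟩
      · have h1 := r.isLt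
        have h2 := c.isLt
        simp only [Set.mem_setOf_eq, A_inl, B_inl, Set.mem_singleton_iff,
          Sum.inl.injEq, Prod.ext_iff, Fin.ext_iff, Fin.val_rev]
        omega
      · have h1 := s.isLt
        have h2 := t.isLt
        simp only [Set.mem_setOf_eq, A_inr, B_inr, Set.mem_singleton_iff,
          Sum.inr.injEq, Prod.ext_iff, Fin.ext_iff, Fin.val_rev, reduceCtorEq, iff_false,
          not_and]
        omega
    rw [hone, Nat.card_coe_set_eq, Set.ncard_singleton]

lemma cardS2 (j : ℕ) (hj : 2 ≤ j) :
    Nat.card {e : SqEdge j | Nat.card (MulAction.orbit (reflGroup j) e) = 2} = 4 * (j - 1) := by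
  classical
  have hset : {e : SqEdge j | Nat.card (MulAction.orbit (reflGroup j) e) = 2} =
      {e | (diagRefl1 j e = e ∨ diagRefl2 j e = e ∨ diagRefl1 j (diagRefl2 j e) = e) ∧
        ¬(diagRefl1 j e = e ∧ diagRefl2 j e = e)} := Set.ext (card_orbit_eq_two_iff j)
  rw [hset]
  have hcongr := Nat.card_congr (Equiv.subtypeSum (p := fun e : SqEdge j =>
    (diagRefl1 j e = e ∨ diagRefl2 j e = e ∨ diagRefl1 j (diagRefl2 j e) = e) ∧
      ¬(diagRefl1 j e = e ∧ diagRefl2 j e = e)))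
  rw [show (Nat.card {e : SqEdge j |
      (diagRefl1 j e = e ∨ diagRefl2 j e = e ∨ diagRefl1 j (diagRefl2 j e) = e) ∧
        ¬(diagRefl1 j e = e ∧ diagRefl2 j e = e)}) = _ from hcongr, Nat.card_sum]
  rw [Nat.card_eq_fintype_card, Nat.card_eq_fintype_card, Fintype.card_subtype,
    Fintype.card_subtype]
  have hl : (Finset.univ.filter (fun a : Fin j × Fin j =>
      (diagRefl1 j (Sum.inl a) = Sum.inl a ∨ diagRefl2 j (Sum.inl a) = Sum.inl a ∨
        diagRefl1 j (diagRefl2 j (Sum.inl a)) = Sum.inl a) ∧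
      ¬(diagRefl1 j (Sum.inl a) = Sum.inl a ∧ diagRefl2 j (Sum.inl a) = Sum.inl a))).card
      = 2 * j - 2 * (j % 2) := by
    rw [← count_fin j]
    apply congrArg Finset.card
    apply Finset.filter_congr
    rintro ⟨r, c⟩ _
    have h1 := r.isLt
    have h2 := c.isLt
    simp only [A_inl, B_inl, Sum.inl.injEq, Prod.ext_iff, Fin.ext_iff, Fin.val_rev,
      Fin.rev_rev]
    constructor <;> intro h <;> [skip; skip] <;> omega
  have hr : (Finset.univ.filter (fun b : Fin (j-1) × Fin (j-1) =>
      (diagRefl1 j (Sum.inr b) = Sum.inr b ∨ diagRefl2 j (Sum.inr b) = Sum.inr b ∨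
        diagRefl1 j (diagRefl2 j (Sum.inr b)) = Sum.inr b) ∧
      ¬(diagRefl1 j (Sum.inr b) = Sum.inr b ∧ diagRefl2 j (Sum.inr b) = Sum.inr b))).card
      = 2 * (j - 1) - 2 * ((j - 1) % 2) := by
    rw [← count_fin (j - 1)]
    apply congrArg Finset.card
    apply Finset.filter_congr
    rintro ⟨s, t⟩ _
    have h1 := s.isLt
    have h2 := t.isLt
    simp only [A_inr, B_inr, Sum.inr.injEq, Prod.ext_iff, Fin.ext_iff, Fin.val_rev,
      Fin.rev_rev]
    constructor <;> intro h <;> [skip; skip] <;> omega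
  rw [hl, hr]  -- may fail due to instance mismatch; adjust
  omega

lemma card_SqEdge (j : ℕ) : Nat.card (SqEdge j) = j * j + (j - 1) * (j - 1) := by
  simp [Nat.card_eq_fintype_card]

/-- The group generated by the two diagonal reflections of the `j×j` surface code
lattice is isomorphic to `ℤ₂ × ℤ₂`, and its action on the edges has exactly one orbit of
size `1`, exactly `2(j-1)` orbits of size `2`, all remaining orbits of size `4`, and
`j(j+1)/2` orbits in total. -/
theorem reflection_group_orbits (j : ℕ) (hj : 2 ≤ j) :
    Nonempty (reflGroup j ≃* Multiplicative (ZMod 2) × Multiplicative (ZMod 2)) ∧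
    Nat.card {q : MulAction.orbitRel.Quotient (reflGroup j) (SqEdge j) |
        Nat.card q.orbit = 1} = 1 ∧
    Nat.card {q : MulAction.orbitRel.Quotient (reflGroup j) (SqEdge j) |
        Nat.card q.orbit = 2} = 2 * (j - 1) ∧
    (∀ q : MulAction.orbitRel.Quotient (reflGroup j) (SqEdge j),
      Nat.card q.orbit = 1 ∨ Nat.card q.orbit = 2 ∨ Nat.card q.orbit = 4) ∧
    Nat.card (MulAction.orbitRel.Quotient (reflGroup j) (SqEdge j)) = j * (j + 1) / 2 := by
  classical
  haveI : Fintype (MulAction.orbitRel.Quotient (reflGroup j) (SqEdge j)) := Fintype.ofFinite _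
  have hesizes : ∀ e : SqEdge j, Nat.card (MulAction.orbit (reflGroup j) e) = 1 ∨
      Nat.card (MulAction.orbit (reflGroup j) e) = 2 ∨
      Nat.card (MulAction.orbit (reflGroup j) e) = 4 := by
    intro e
    have hd := card_orbit_dvd j hj e
    have hp := card_orbit_pos j e
    have hle : Nat.card (MulAction.orbit (reflGroup j) e) ≤ 4 := Nat.le_of_dvd (by norm_num) hd
    set d := Nat.card (MulAction.orbit (reflGroup j) e) with hd_def
    interval_cases d <;> first
      | (left; rfl)
      | (right; left; rfl)
      | (right; right; rfl)
      | omega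
  have hsizes : ∀ q : MulAction.orbitRel.Quotient (reflGroup j) (SqEdge j),
      Nat.card q.orbit = 1 ∨ Nat.card q.orbit = 2 ∨ Nat.card q.orbit = 4 := by
    intro q
    induction q using Quotient.inductionOn' with
    | h e =>
      rw [MulAction.orbitRel.Quotient.orbit_mk]
      exact hesizes e
  have hone := fiber_count (G := reflGroup j) (α := SqEdge j) 1
  have htwo := fiber_count (G := reflGroup j) (α := SqEdge j) 2
  have hfour := fiber_count (G := reflGroup j) (α := SqEdge j) 4
  rw [cardS1 j hj] at hone
  rw [cardS2 j hj] at htwo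
  have hΩ : Nat.card (MulAction.orbitRel.Quotient (reflGroup j) (SqEdge j)) =
      Nat.card {q : MulAction.orbitRel.Quotient (reflGroup j) (SqEdge j) |
        Nat.card q.orbit = 1}
      + Nat.card {q : MulAction.orbitRel.Quotient (reflGroup j) (SqEdge j) |
        Nat.card q.orbit = 2}
      + Nat.card {q : MulAction.orbitRel.Quotient (reflGroup j) (SqEdge j) |
        Nat.card q.orbit = 4} :=
    card_partition _ hsizes
  have hE : Nat.card (SqEdge j) =
      Nat.card {e : SqEdge j | Nat.card (MulAction.orbit (reflGroup j) e) = 1}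
      + Nat.card {e : SqEdge j | Nat.card (MulAction.orbit (reflGroup j) e) = 2}
      + Nat.card {e : SqEdge j | Nat.card (MulAction.orbit (reflGroup j) e) = 4} :=
    card_partition _ hesizes
  rw [card_SqEdge j, cardS1 j hj, cardS2 j hj] at hE
  refine ⟨refl_iso j hj, by omega, by omega, hsizes, ?_⟩
  obtain ⟨k, rfl⟩ : ∃ k, j = k + 2 := ⟨j - 2, by omega⟩
  have hsq : (k + 2) * (k + 2) + (k + 2 - 1) * (k + 2 - 1) = 2 * (k * k) + 6 * k + 5 := by
    have h21 : k + 2 - 1 = k + 1 := rfl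
    rw [h21]; ring
  have hgoal : (k + 2) * (k + 2 + 1) = k * k + 5 * k + 6 := by ring
  omega
end
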